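/- arXiv:2105.01711 — 7 statements merged into one kernel-verified Lean document; each statement's English description precedes it below -/
import Mathlib

section
/- Let Σ be an alphabet and let L ⊆ Σ* be a language satisfying property (*): for all words w₁, w₂, w₃ ∈ Σ* and every letter a ∈ Σ, if w₁ a w₂ w₃ ∈ L then w₁ a w₂ a w₃ ∈ L. Then L is closed under precomposition with ordered surjections: if f : Fin n → Fin m is an ordered surjection and u : Fin m → Σ is a word (of length m) belonging to L, then the word u ∘ f : Fin n → Σ (of length n) also belongs to L. -/
/-- A surjection `f : Fin n → Fin m` is an *ordered surjection* if the minima of the fibers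
`f⁻¹(i)` are strictly increasing in `i`. -/
def IsOrderedSurjection {n m : ℕ} (f : Fin n → Fin m) : Prop :=
  Function.Surjective f ∧
    StrictMono fun i : Fin m => sInf {x : ℕ | ∃ h : x < n, f ⟨x, h⟩ = i}


theorem dup_mem {A : Type*} (L : Set (List A))
    (hL : ∀ (w₁ w₂ w₃ : List A) (a : A),
      w₁ ++ a :: (w₂ ++ w₃) ∈ L → w₁ ++ a :: (w₂ ++ a :: w₃) ∈ L)
    (l : List A) (p q : ℕ) (hp : p < l.length) (hq : q < p)
    (ha : l[p] = l[q]'(hq.trans hp)) (he : l.eraseIdx p ∈ L) : l ∈ L := by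
  set a := l[q]'(hq.trans hp) with ha'
  have h1 : l = l.take q ++ a :: ((l.drop (q+1)).take (p-q-1) ++ a :: l.drop (p+1)) := by
    conv_lhs => rw [← List.take_append_drop q l, List.drop_eq_getElem_cons (hq.trans hp)]
    congr 1
    rw [← ha']
    congr 1
    conv_lhs => rw [← List.take_append_drop (p-q-1) (l.drop (q+1)), List.drop_drop]
    have : q + 1 + (p - q - 1) = p := by omega
    rw [this, List.drop_eq_getElem_cons hp, ha]
  have h2 : l.eraseIdx p = l.take q ++ a :: ((l.drop (q+1)).take (p-q-1) ++ l.drop (p+1)) := by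
    rw [List.eraseIdx_eq_take_drop_succ]
    have h3 : p = q + 1 + (p - q - 1) := by omega
    conv_lhs => rw [h3, List.take_add, List.take_add]
    have h4 : (l.drop q).take 1 = [a] := by
      rw [List.drop_eq_getElem_cons (hq.trans hp), ← ha']
      simp
    rw [h4]
    have h5 : q + 1 + (p - q - 1) + 1 = p + 1 := by omega
    rw [h5]
    simp
  rw [h1]; exact hL _ _ _ _ (h2 ▸ he)

theorem succAbove_val' {k : ℕ} (p : Fin (k+1)) (j : Fin k) :
    ((p.succAbove j) : ℕ) = if (j:ℕ) < (p:ℕ) then (j:ℕ) else (j:ℕ)+1 := by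
  rcases lt_or_ge (j.castSucc) p with h | h
  · rw [Fin.succAbove_of_castSucc_lt _ _ h, if_pos (by simpa [Fin.lt_def] using h)]; simp
  · rw [Fin.succAbove_of_le_castSucc _ _ h, if_neg (by simp [Fin.le_def] at h; omega)]; simp

theorem ofFn_comp_succAbove {A : Type*} {k : ℕ} (g : Fin (k+1) → A) (p : Fin (k+1)) :
    List.ofFn (g ∘ p.succAbove) = (List.ofFn g).eraseIdx (p : ℕ) := by
  apply List.ext_getElem
  · simp [List.length_eraseIdx, p.isLt]
  · intro i h1 h2
    rw [List.getElem_ofFn, List.getElem_eraseIdx]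
    simp only [Function.comp_apply]
    by_cases hip : i < (p:ℕ)
    · rw [dif_pos hip, List.getElem_ofFn]
      congr 1; apply Fin.ext; rw [succAbove_val']; simp [hip]
    · rw [dif_neg hip, List.getElem_ofFn]
      congr 1; apply Fin.ext; rw [succAbove_val']; simp [hip]

theorem le_of_strictMono_fin {n k : ℕ} {G : Fin n → Fin k} (hG : StrictMono G) (i : Fin n) :
    (i : ℕ) ≤ (G i : ℕ) := by
  induction' h : (i:ℕ) using Nat.strong_induction_on with v ih generalizing i
  subst h
  rcases Nat.eq_zero_or_pos (i:ℕ) with h0 | h0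
  · omega
  · have hj : (i:ℕ) - 1 < n := by omega
    have hlt : (⟨(i:ℕ)-1, hj⟩ : Fin n) < i := by simp [Fin.lt_def]; omega
    have h1 := hG hlt
    have h2 := ih ((i:ℕ)-1) (by omega) ⟨(i:ℕ)-1, hj⟩ rfl
    rw [Fin.lt_def] at h1
    omega

theorem mem_aux {A : Type*} (L : Set (List A))
    (hL : ∀ (w₁ w₂ w₃ : List A) (a : A),
      w₁ ++ a :: (w₂ ++ w₃) ∈ L → w₁ ++ a :: (w₂ ++ a :: w₃) ∈ L)
    {n m : ℕ} (f : Fin n → Fin m)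
    (hf : Function.Surjective f ∧
      StrictMono fun i : Fin m => sInf {x : ℕ | ∃ h : x < n, f ⟨x, h⟩ = i})
    (u : Fin m → A) (hu : List.ofFn u ∈ L) :
    List.ofFn (u ∘ f) ∈ L := by
  induction' n using Nat.strong_induction_on with n ih
  obtain ⟨hsurj, hmono⟩ := hf
  set g : Fin m → ℕ := fun i => sInf {x : ℕ | ∃ h : x < n, f ⟨x, h⟩ = i} with hg
  have hfib : ∀ i : Fin m, ∃ h : g i < n, f ⟨g i, h⟩ = i := by
    intro i
    obtain ⟨x, hx⟩ := hsurj i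
    exact Nat.sInf_mem (⟨x, x.isLt, by simpa using hx⟩ :
      {x : ℕ | ∃ h : x < n, f ⟨x, h⟩ = i}.Nonempty)
  have hgle : ∀ x : Fin n, g (f x) ≤ (x : ℕ) := fun x => Nat.sInf_le ⟨x.isLt, by simp⟩
  by_cases hcase : ∀ x : Fin n, g (f x) = (x : ℕ)
  · -- f is the identity
    have hinj : Function.Injective f := fun x y hxy =>
      Fin.ext (by rw [← hcase x, ← hcase y, hxy])
    have hnm : n = m := by
      have h1 := Fintype.card_le_of_surjective f hsurj
      have h2 := Fintype.card_le_of_injective f hinj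
      simp at h1 h2; omega
    subst hnm
    have hGmono : StrictMono (fun i : Fin n => (⟨g i, (hfib i).1⟩ : Fin n)) := by
      intro i j hij
      simpa [Fin.lt_def] using hmono hij
    have hfmono : StrictMono f := by
      intro x y hxy
      rcases lt_trichotomy (f x) (f y) with h | h | h
      · exact h
      · exact absurd (hinj h) (ne_of_lt hxy)
      · have h3 := hmono h
        change g (f y) < g (f x) at h3
        rw [hcase x, hcase y] at h3
        rw [Fin.lt_def] at hxy
        omega
    have hid : ∀ x : Fin n, f x = x := by
      intro x
      have h1 := le_of_strictMono_fin hfmono x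
      have h2 := le_of_strictMono_fin hGmono (f x)
      simp only at h2
      rw [hcase x] at h2
      exact Fin.ext (by omega)
    have : u ∘ f = u := by funext x; simp [hid x]
    rwa [this]
  · push_neg at hcase
    obtain ⟨p, hp⟩ := hcase
    have hqlt : g (f p) < (p : ℕ) := lt_of_le_of_ne (hgle p) hp
    obtain ⟨k, rfl⟩ : ∃ k, n = k + 1 := ⟨n - 1, by omega⟩
    set q := g (f p) with hq
    -- no g value equals p
    have hgnep : ∀ i : Fin m, g i ≠ (p : ℕ) := by
      intro i hgi
      obtain ⟨h1, h2⟩ := hfib i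
      have : f p = i := by rw [← h2]; congr 1; exact Fin.ext hgi.symm
      rw [← this] at hgi
      omega
    have hpk0 : (p : ℕ) ≤ k := Nat.lt_succ_iff.mp p.isLt
    set f' : Fin k → Fin m := f ∘ p.succAbove with hf'
    have happ : ∀ (x : ℕ) (hx : x < k),
        f' ⟨x, hx⟩ = f ⟨if x < (p:ℕ) then x else x+1, by split <;> omega⟩ := by
      intro x hx
      show f (p.succAbove ⟨x, hx⟩) = _
      congr 1
      apply Fin.ext
      rw [succAbove_val']
    -- surjectivity of f'
    have hsurj' : Function.Surjective f' := by
      intro i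
      obtain ⟨h1, h2⟩ := hfib i
      obtain ⟨y, hy⟩ := Fin.exists_succAbove_eq
        (show (⟨g i, h1⟩ : Fin (k+1)) ≠ p from fun hc => hgnep i (by rw [← hc]))
      exact ⟨y, by rw [hf', Function.comp_apply, hy, h2]⟩
    -- compute new infima
    have hinf : ∀ i : Fin m,
        sInf {x : ℕ | ∃ h : x < k, f' ⟨x, h⟩ = i} =
          if g i < (p : ℕ) then g i else g i - 1 := by
      intro i
      obtain ⟨h1, h2⟩ := hfib i
      have hne := hgnep i
      have hpk : (p : ℕ) ≤ k := Nat.lt_succ_iff.mp p.isLt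
      have hwit : (if g i < (p:ℕ) then g i else g i - 1) ∈
          {x : ℕ | ∃ h : x < k, f' ⟨x, h⟩ = i} := by
        by_cases hcs : g i < (p : ℕ)
        · rw [if_pos hcs]
          refine ⟨by omega, ?_⟩
          rw [happ]
          simp only [if_pos hcs]
          exact h2
        · have hgp : (p : ℕ) < g i := by omega
          rw [if_neg hcs]
          refine ⟨by omega, ?_⟩
          rw [happ]
          simp only [if_neg (show ¬ (g i - 1 < (p:ℕ)) by omega)]
          have he1 : g i - 1 + 1 = g i := by omega
          simp only [he1]
          exact h2
      refine le_antisymm (Nat.sInf_le hwit) (le_csInf ⟨_, hwit⟩ ?_)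
      rintro y ⟨hyk, hy⟩
      have hmem2 : (if (y:ℕ) < (p:ℕ) then y else y + 1) ∈
          {x : ℕ | ∃ h : x < k+1, f ⟨x, h⟩ = i} := by
        rw [happ] at hy
        exact ⟨by split <;> omega, hy⟩
      have hle := Nat.sInf_le hmem2
      change g i ≤ _ at hle
      split at hle <;> split <;> omega
    have hmono' : StrictMono fun i : Fin m => sInf {x : ℕ | ∃ h : x < k, f' ⟨x, h⟩ = i} := by
      intro i j hij
      have := hmono hij
      simp only [hinf]
      have h1 := hgnep i
      have h2 := hgnep j
      change g i < g j at this
      split <;> split <;> omega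
    have hmem := ih k (by omega) f' ⟨hsurj', hmono'⟩
    refine dup_mem L hL (List.ofFn (u ∘ f)) (p:ℕ) q (by simp; omega) hqlt ?_ ?_
    · have h2 := (hfib (f p)).2
      simp only [List.getElem_ofFn, Function.comp_apply]
      exact congrArg u h2.symm
    · rw [← ofFn_comp_succAbove]
      exact hmem

/-- If a language `L` satisfies property (*) — whenever `w₁ a w₂ w₃ ∈ L`
then `w₁ a w₂ a w₃ ∈ L` — then `L` is closed under precomposition with ordered surjections:
if `f : Fin n → Fin m` is an ordered surjection and the word `u : Fin m → A` lies in `L`,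
then so does the word `u ∘ f : Fin n → A`. -/
theorem mem_of_orderedSurjection_comp {A : Type*} (L : Set (List A))
    (hL : ∀ (w₁ w₂ w₃ : List A) (a : A),
      w₁ ++ a :: (w₂ ++ w₃) ∈ L → w₁ ++ a :: (w₂ ++ a :: w₃) ∈ L)
    {n m : ℕ} (f : Fin n → Fin m) (hf : IsOrderedSurjection f)
    (u : Fin m → A) (hu : List.ofFn u ∈ L) :
    List.ofFn (u ∘ f) ∈ L :=
  mem_aux L hL f hf u hu
end

section
/- Let Σ be an alphabet, let L ⊆ Σ* be a language satisfying property (*): for all words w₁, w₂, w₃ ∈ Σ* and every letter a ∈ Σ, if w₁ a w₂ w₃ ∈ L then w₁ a w₂ a w₃ ∈ L. Let w : Fin n → Σ be a word of length n. Then the set I(w, L) := { s : s is an equivalence relation on Fin n, s ≤ ker(w), and the quotient word w_s belongs to L } is downward closed in the lattice of equivalence relations on Fin n: if s ∈ I(w, L) and t ≤ s, then t ∈ I(w, L). (Equivalently, I(w, L) is an upward-closed ideal of the partition lattice in the paper's convention, where the discrete partition is the top element.) -/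
open scoped Classical

/-- The quotient word `w_s` of a word `w : Fin n → A` by an equivalence relation `s`
(meaningful when `s ≤ Setoid.ker w`): the list of minimal representatives of the classes
of `s`, in increasing order, mapped through `w`. -/
noncomputable def quotientWord {A : Type*} {n : ℕ} (s : Setoid (Fin n)) (w : Fin n → A) :
    List A :=
  ((Finset.univ.filter fun i : Fin n => ∀ j, s.r i j → i ≤ j).sort (· ≤ ·)).map w

lemma aux_insert {A : Type*} {n : ℕ} (L : Set (List A))
    (hL : ∀ (w₁ w₂ w₃ : List A) (a : A),
      w₁ ++ a :: (w₂ ++ w₃) ∈ L → w₁ ++ a :: (w₂ ++ a :: w₃) ∈ L)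
    (w : Fin n → A) (u : List (Fin n)) (hu : u.Pairwise (· < ·)) (huL : u.map w ∈ L) :
    ∀ (N : ℕ) (v : List (Fin n)), v.length = N → v.Pairwise (· < ·) →
      (∀ z ∈ u, z ∈ v) →
      (∀ x ∈ v, x ∉ u → ∃ y ∈ u, y < x ∧ w y = w x) → v.map w ∈ L := by
  intro N
  induction N using Nat.strong_induction_on with
  | _ N ih =>
    intro v hlen hv hsub hcond
    by_cases hall : ∀ x ∈ v, x ∈ u
    · -- v = u
      have hperm : List.Perm v u := by
        apply (List.perm_ext_iff_of_nodup hv.nodup hu.nodup).2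
        intro a; exact ⟨hall a, hsub a⟩
      have : v = u := List.Perm.eq_of_pairwise' hv hu hperm
      rwa [this]
    · push_neg at hall
      obtain ⟨x, hxv, hxu⟩ := hall
      obtain ⟨y, hyu, hyx, hwyx⟩ := hcond x hxv hxu
      obtain ⟨p, q, rfl⟩ := List.append_of_mem hxv
      have hyp : y ∈ p := by
        have hyv : y ∈ p ++ x :: q := hsub y hyu
        rcases List.mem_append.1 hyv with h | h
        · exact h
        · exfalso
          rcases List.mem_cons.1 h with h | h
          · exact lt_irrefl _ (h ▸ hyx)
          · have hsq : (x :: q).Pairwise (· < ·) := (List.pairwise_append.1 hv).2.1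
            exact lt_asymm hyx (List.rel_of_pairwise_cons hsq h)
      obtain ⟨p₁, p₂, rfl⟩ := List.append_of_mem hyp
      -- v' = p ++ q
      set p := p₁ ++ y :: p₂ with hp
      have hsl : (p ++ q).Sublist (p ++ x :: q) := by
        apply List.Sublist.append_left
        exact List.sublist_cons_self x q
      have hv' : (p ++ q).Pairwise (· < ·) := hv.sublist hsl
      have hlen' : (p ++ q).length < N := by
        subst hlen; simp
      have hmem : (p ++ q).map w ∈ L := by
        apply ih _ hlen' _ rfl hv'
        · intro z hz
          have hzv := hsub z hz
          have hzx : z ≠ x := by rintro rfl; exact hxu hz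
          rcases List.mem_append.1 hzv with h | h
          · exact List.mem_append.2 (.inl h)
          · rcases List.mem_cons.1 h with h | h
            · exact absurd h hzx
            · exact List.mem_append.2 (.inr h)
        · intro x' hx' hx'u
          exact hcond x' (hsl.mem hx') hx'u
      -- now insert w x = w y
      have key := hL ((p₁).map w) (p₂.map w) (q.map w) (w y) ?_
      · have : (p ++ x :: q).map w
            = p₁.map w ++ w y :: (p₂.map w ++ w y :: q.map w) := by
          simp [hp, hwyx]
        rwa [this]
      · have : (p ++ q).map w = p₁.map w ++ w y :: (p₂.map w ++ q.map w) := by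
          simp [hp]
        rwa [this] at hmem

/-- If `L` satisfies property (*), then for any word `w : Fin n → A`
the set `I(w, L) = {s | s ≤ ker w and w_s ∈ L}` is downward closed in the lattice of
equivalence relations on `Fin n` (ordered by refinement, discrete partition at the bottom);
equivalently it is an upward-closed ideal of the partition lattice in the paper's
convention. -/
theorem quotientWord_ideal_downward_closed {A : Type*} {n : ℕ} (L : Set (List A))
    (hL : ∀ (w₁ w₂ w₃ : List A) (a : A),
      w₁ ++ a :: (w₂ ++ w₃) ∈ L → w₁ ++ a :: (w₂ ++ a :: w₃) ∈ L)
    (w : Fin n → A) (s t : Setoid (Fin n)) (hts : t ≤ s)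
    (hs : s ≤ Setoid.ker w) (hsL : quotientWord s w ∈ L) :
    t ≤ Setoid.ker w ∧ quotientWord t w ∈ L := by
  have htk : t ≤ Setoid.ker w := le_trans hts hs
  refine ⟨htk, ?_⟩
  set S := Finset.univ.filter fun i : Fin n => ∀ j, s.r i j → i ≤ j with hS
  set T := Finset.univ.filter fun i : Fin n => ∀ j, t.r i j → i ≤ j with hT
  have hST : S ⊆ T := by
    intro i hi
    simp only [hS, hT, Finset.mem_filter, Finset.mem_univ, true_and] at hi ⊢
    exact fun j hj => hi j (hts hj)
  unfold quotientWord
  apply aux_insert L hL w (S.sort (· ≤ ·)) (Finset.sortedLT_sort S).pairwise hsL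
    _ (T.sort (· ≤ ·)) rfl (Finset.sortedLT_sort T).pairwise
  · intro z hz
    rw [Finset.mem_sort] at hz ⊢
    exact hST hz
  · intro x hx hxS
    rw [Finset.mem_sort] at hx hxS
    simp only [hT, Finset.mem_filter, Finset.mem_univ, true_and] at hx
    simp only [hS, Finset.mem_filter, Finset.mem_univ, true_and] at hxS
    push_neg at hxS
    obtain ⟨j, hxj, hjx⟩ := hxS
    set C := Finset.univ.filter fun k : Fin n => s.r x k with hC
    have hCne : C.Nonempty := ⟨x, by simp only [hC, Finset.mem_filter, Finset.mem_univ, true_and]; exact s.refl' x⟩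
    set y := C.min' hCne with hy
    have hyC : y ∈ C := Finset.min'_mem C hCne
    have hxy : s.r x y := by
      simpa [hC, Finset.mem_filter] using hyC
    refine ⟨y, ?_, ?_, ?_⟩
    · rw [Finset.mem_sort]
      simp only [hS, Finset.mem_filter, Finset.mem_univ, true_and]
      intro k hk
      exact Finset.min'_le C k (by simp only [hC, Finset.mem_filter, Finset.mem_univ, true_and]; exact s.trans' hxy hk)
    · have hjC : j ∈ C := by simp [hC, hxj]
      exact lt_of_le_of_lt (Finset.min'_le C j hjC) hjx
    · exact (hs (s.symm' hxy) : w y = w x)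
end

section
/- Let f : Fin n → Y be a surjection onto a type Y (necessarily finite). Then: (i) the map y ↦ min f⁻¹(y) is injective; (ii) there is a unique linear order on Y such that for all y, y' ∈ Y, y ≤ y' holds if and only if min f⁻¹(y) ≤ min f⁻¹(y') in Fin n; and (iii) this construction is compatible with composition: if g : Y → Z is a further surjection, then the linear order induced on Z by the surjection g ∘ f : Fin n → Z coincides with the linear order induced on Z by the surjection g from the linearly ordered set (Y, ≤) constructed in (ii). -/
open scoped Classical

/-- The minimum of the fiber `f⁻¹(y)` of a surjection `f` from a finite linearly
ordered type. -/
noncomputable def fibMin {X Y : Type*} [LinearOrder X] [Fintype X]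
    (f : X → Y) (hf : Function.Surjective f) (y : Y) : X :=
  (Finset.univ.filter fun x => f x = y).min' (by
    obtain ⟨x, hx⟩ := hf y
    exact ⟨x, by simp [hx]⟩)

lemma fibMin_spec {X Y : Type*} [LinearOrder X] [Fintype X]
    (f : X → Y) (hf : Function.Surjective f) (y : Y) : f (fibMin f hf y) = y := by
  have := Finset.min'_mem (Finset.univ.filter fun x => f x = y) (by
    obtain ⟨x, hx⟩ := hf y
    exact ⟨x, by simp [hx]⟩)
  exact (Finset.mem_filter.mp this).2

lemma fibMin_le {X Y : Type*} [LinearOrder X] [Fintype X]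
    (f : X → Y) (hf : Function.Surjective f) {y : Y} {x : X} (hx : f x = y) :
    fibMin f hf y ≤ x :=
  Finset.min'_le _ _ (by simp [hx])

/-- For a surjection `f : Fin n → Y`: (i) `y ↦ min f⁻¹(y)` is injective;
(ii) there is a unique linear order on `Y` with `y ≤ y' ↔ min f⁻¹(y) ≤ min f⁻¹(y')`; and
(iii) for a further surjection `g : Y → Z`, the order induced on `Z` by `g ∘ f` coincides
with the order induced on `Z` by `g` from the linearly ordered set `(Y, ≤)` of (ii):
if `y` (resp. `y'`) is the `≤`-minimum of `g⁻¹(z)` (resp. `g⁻¹(z')`), then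
`z ≤ z'` in the `g ∘ f`-order iff `y ≤ y'`. -/
theorem orderedSurjection_order_unique_and_compatible {n : ℕ} {Y Z : Type*}
    (f : Fin n → Y) (hf : Function.Surjective f)
    (g : Y → Z) (hg : Function.Surjective g) :
    Function.Injective (fibMin f hf) ∧
    (∃! le : Y → Y → Prop, IsLinearOrder Y le ∧
      ∀ y y', le y y' ↔ fibMin f hf y ≤ fibMin f hf y') ∧
    (∀ (z z' : Z) (y y' : Y), g y = z → g y' = z' →
      (∀ y₂, g y₂ = z → fibMin f hf y ≤ fibMin f hf y₂) →
      (∀ y₂, g y₂ = z' → fibMin f hf y' ≤ fibMin f hf y₂) →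
      (fibMin (g ∘ f) (hg.comp hf) z ≤ fibMin (g ∘ f) (hg.comp hf) z' ↔
        fibMin f hf y ≤ fibMin f hf y')) := by
  have hinj : Function.Injective (fibMin f hf) := by
    intro y y' h
    have := congrArg f h
    rwa [fibMin_spec f hf, fibMin_spec f hf] at this
  have key : ∀ (z : Z) (y : Y), g y = z →
      (∀ y₂, g y₂ = z → fibMin f hf y ≤ fibMin f hf y₂) →
      fibMin (g ∘ f) (hg.comp hf) z = fibMin f hf y := by
    intro z y hy hmin
    apply le_antisymm
    · exact fibMin_le _ _ (by simp [fibMin_spec f hf y, hy])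
    · set x₀ := fibMin (g ∘ f) (hg.comp hf) z with hx₀
      have hgz : g (f x₀) = z := fibMin_spec (g ∘ f) (hg.comp hf) z
      calc fibMin f hf y ≤ fibMin f hf (f x₀) := hmin _ hgz
        _ ≤ x₀ := fibMin_le _ _ rfl
  refine ⟨hinj, ⟨fun y y' => fibMin f hf y ≤ fibMin f hf y', ⟨?_, fun _ _ => Iff.rfl⟩, ?_⟩, ?_⟩
  · exact
      { refl := fun y => le_refl _
        trans := fun a b c hab hbc => le_trans hab hbc
        antisymm := fun a b h1 h2 => hinj (le_antisymm h1 h2)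
        total := fun a b => le_total _ _ }
  · rintro le ⟨_, hle⟩
    funext y y'
    exact propext ((hle y y').trans Iff.rfl)
  · intro z z' y y' hy hy' hm hm'
    rw [key z y hy hm, key z' y' hy' hm']
end

section
/- Let j, r be natural numbers and let D denote the formal derivative on the formal power series ring ℚ[[u]]. Then the kernel in ℚ[[u]] of the operator ∏_{a=0}^{j−1} (D − a·id)^r (equivalently, of the operator binom(D, j)^r, which is a nonzero scalar multiple of it) is exactly the ℚ-linear span of the power series u^d · exp(a·u) for natural numbers d < r and a < j, where exp(a·u) denotes the formal exponential series ∑_{k≥0} a^k u^k / k!. -/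
/-- The formal derivative on `ℚ⟦u⟧`, as a `ℚ`-linear endomorphism. -/
noncomputable def Dop : Module.End ℚ (PowerSeries ℚ) :=
  (PowerSeries.derivative ℚ).toLinearMap


open PowerSeries

noncomputable def Eexp (a : ℚ) : ℚ⟦X⟧ := rescale a (exp ℚ)

lemma Dop_apply (f : ℚ⟦X⟧) : Dop f = derivative ℚ f := rfl

lemma coeff_Dop (f : ℚ⟦X⟧) (n : ℕ) :
    coeff n (Dop f) = coeff (n + 1) f * (n + 1) := coeff_derivative f n

lemma Dop_E (a : ℚ) : Dop (Eexp a) = a • Eexp a := by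
  ext n
  rw [coeff_Dop]
  simp only [Eexp, coeff_smul, coeff_rescale, coeff_exp, smul_eq_mul,
    Algebra.algebraMap_self, RingHom.id_apply]
  rw [Nat.factorial_succ]
  have h1 : ((n+1 : ℕ) : ℚ) ≠ 0 := by positivity
  have h2 : ((n.factorial : ℚ)) ≠ 0 := by positivity
  push_cast
  field_simp
  ring

lemma Dop_mul (f g : ℚ⟦X⟧) : Dop (f * g) = f * Dop g + g * Dop f := by
  simpa [Dop_apply, smul_eq_mul] using (PowerSeries.derivative ℚ).leibniz f g

lemma DconjOne (a b : ℚ) (g : ℚ⟦X⟧) :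
    (Dop - b • (1 : Module.End ℚ ℚ⟦X⟧)) (Eexp a * g)
      = Eexp a * ((Dop + (a - b) • (1 : Module.End ℚ ℚ⟦X⟧)) g) := by
  simp only [LinearMap.sub_apply, LinearMap.add_apply, LinearMap.smul_apply,
    Module.End.one_apply, Dop_mul, Dop_E, mul_add]
  rw [mul_smul_comm a g (Eexp a), mul_comm g (Eexp a), mul_smul_comm (a-b) (Eexp a) g,
    sub_smul]
  abel

lemma DconjPow (a b : ℚ) (r : ℕ) (g : ℚ⟦X⟧) :
    ((Dop - b • (1 : Module.End ℚ ℚ⟦X⟧)) ^ r) (Eexp a * g)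
      = Eexp a * (((Dop + (a - b) • (1 : Module.End ℚ ℚ⟦X⟧)) ^ r) g) := by
  induction r with
  | zero => simp
  | succ r ih =>
      rw [pow_succ', pow_succ', Module.End.mul_apply, Module.End.mul_apply, ih, DconjOne]

lemma E_mul_E_neg (a : ℚ) : Eexp a * Eexp (-a) = 1 := by
  rw [Eexp, Eexp, exp_mul_exp_eq_exp_add, add_neg_cancel]
  ext n
  rcases n with _ | n <;>
    simp [coeff_rescale, coeff_exp, coeff_one, coeff_zero_eq_constantCoeff]

lemma E_ne_zero (a : ℚ) : Eexp a ≠ 0 := by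
  intro h
  have := congrArg constantCoeff (E_mul_E_neg a)
  rw [h] at this
  simp at this

lemma Dop_pow_zero_iff (r : ℕ) (f : ℚ⟦X⟧) :
    (Dop ^ r) f = 0 ↔ ∀ m, r ≤ m → coeff m f = 0 := by
  induction r generalizing f with
  | zero =>
      simp only [pow_zero, Module.End.one_apply, Nat.zero_le, true_implies]
      constructor
      · intro h m; rw [h]; simp
      · intro h; ext m; simp [h m]
  | succ r ih =>
      rw [pow_succ, Module.End.mul_apply, ih]
      constructor
      · intro h m hm
        obtain ⟨k, rfl⟩ : ∃ k, m = k + 1 := ⟨m - 1, by omega⟩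
        have h2 := h k (by omega)
        rw [coeff_Dop] at h2
        rcases mul_eq_zero.mp h2 with h' | h'
        · exact h'
        · exact absurd h' (by positivity)
      · intro h m hm
        rw [coeff_Dop, h (m + 1) (by omega), zero_mul]

lemma Dop_pow_X_pow (r d : ℕ) (hd : d < r) : (Dop ^ r) ((X : ℚ⟦X⟧) ^ d) = 0 := by
  rw [Dop_pow_zero_iff]
  intro m hm
  rw [coeff_X_pow, if_neg (by omega)]

lemma ker_Dop_pow (r : ℕ) :
    LinearMap.ker (Dop ^ r) = Submodule.span ℚ {f : ℚ⟦X⟧ | ∃ d < r, f = X ^ d} := by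
  apply le_antisymm
  · intro f hf
    rw [LinearMap.mem_ker, Dop_pow_zero_iff] at hf
    have hfeq : f = ∑ d ∈ Finset.range r, coeff d f • (X : ℚ⟦X⟧) ^ d := by
      ext m
      rw [map_sum]
      simp only [coeff_smul, coeff_X_pow, smul_eq_mul, mul_ite, mul_one, mul_zero]
      rw [Finset.sum_ite_eq (Finset.range r) m]
      by_cases hm : m < r
      · simp [Finset.mem_range.mpr hm]
      · simp [hm, hf m (by omega)]
    rw [hfeq]
    apply Submodule.sum_mem
    intro d hd
    exact Submodule.smul_mem _ _ (Submodule.subset_span ⟨d, Finset.mem_range.mp hd, rfl⟩)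
  · rw [Submodule.span_le]
    rintro f ⟨d, hd, rfl⟩
    exact LinearMap.mem_ker.mpr (Dop_pow_X_pow r d hd)

lemma mul_mem_span_image {a : ℚ} {S : Set ℚ⟦X⟧} {g : ℚ⟦X⟧}
    (hg : g ∈ Submodule.span ℚ S) :
    Eexp a * g ∈ Submodule.span ℚ ((fun x => Eexp a * x) '' S) := by
  have := Submodule.mem_map_of_mem (f := LinearMap.mulLeft ℚ (Eexp a)) hg
  rw [Submodule.map_span] at this
  exact this

lemma ker_shift (a : ℚ) (r : ℕ) :
    LinearMap.ker ((Dop - a • (1 : Module.End ℚ ℚ⟦X⟧)) ^ r)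
      = Submodule.span ℚ {f : ℚ⟦X⟧ | ∃ d < r, f = X ^ d * Eexp a} := by
  apply le_antisymm
  · intro f hf
    rw [LinearMap.mem_ker] at hf
    set g := Eexp (-a) * f with hg
    have hfg : f = Eexp a * g := by
      rw [hg, ← mul_assoc, E_mul_E_neg, one_mul]
    have h0 : Eexp a * ((Dop ^ r) g) = 0 := by
      have := DconjPow a a r g
      rw [sub_self, zero_smul, add_zero, ← hfg] at this
      rw [← this, hf]
    have hker : (Dop ^ r) g = 0 := by
      rcases mul_eq_zero.mp h0 with h | h
      · exact absurd h (E_ne_zero a)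
      · exact h
    have hspan : g ∈ Submodule.span ℚ {f : ℚ⟦X⟧ | ∃ d < r, f = X ^ d} := by
      rw [← ker_Dop_pow]; exact LinearMap.mem_ker.mpr hker
    rw [hfg]
    have hsub : Submodule.span ℚ ((fun x => Eexp a * x) '' {f : ℚ⟦X⟧ | ∃ d < r, f = X ^ d})
        ≤ Submodule.span ℚ {f : ℚ⟦X⟧ | ∃ d < r, f = X ^ d * Eexp a} := by
      rw [Submodule.span_le]
      rintro x ⟨y, ⟨d, hd, rfl⟩, rfl⟩
      exact Submodule.subset_span ⟨d, hd, mul_comm _ _⟩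
    exact hsub (mul_mem_span_image hspan)
  · rw [Submodule.span_le]
    rintro f ⟨d, hd, rfl⟩
    rw [SetLike.mem_coe, LinearMap.mem_ker, mul_comm, DconjPow, sub_self, zero_smul,
      add_zero, Dop_pow_X_pow r d hd, mul_zero]

lemma Dop_X_pow (n : ℕ) : Dop ((X : ℚ⟦X⟧) ^ (n + 1)) = ((n + 1 : ℕ) : ℚ) • (X : ℚ⟦X⟧) ^ n := by
  ext m
  rw [coeff_Dop]
  simp only [coeff_X_pow, coeff_smul, smul_eq_mul, mul_ite, mul_one, mul_zero]
  by_cases h : m = n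
  · subst h; simp
  · rw [if_neg (by omega), if_neg h, zero_mul]

lemma Dop_one : Dop (1 : ℚ⟦X⟧) = 0 := by
  ext m; rw [coeff_Dop, coeff_one, if_neg (by omega), zero_mul, map_zero]

lemma surj_step (c : ℚ) (hc : c ≠ 0) (r : ℕ) :
    ∀ d, d < r → (X : ℚ⟦X⟧) ^ d ∈
      Submodule.map (Dop + c • (1 : Module.End ℚ ℚ⟦X⟧))
        (Submodule.span ℚ {f : ℚ⟦X⟧ | ∃ e < r, f = X ^ e}) := by
  intro d
  induction d with
  | zero =>
      intro hd
      refine ⟨c⁻¹ • 1, Submodule.smul_mem _ _ (Submodule.subset_span ⟨0, hd, by simp⟩), ?_⟩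
      simp only [LinearMap.add_apply, LinearMap.smul_apply, Module.End.one_apply, map_smul,
        Dop_one, smul_zero, zero_add, pow_zero]
      rw [smul_smul, inv_mul_cancel₀ hc, one_smul]
  | succ d ih =>
      intro hd
      obtain ⟨p, hp, hap⟩ := ih (by omega)
      refine ⟨c⁻¹ • X ^ (d + 1) - (c⁻¹ * ((d + 1 : ℕ) : ℚ)) • p,
        Submodule.sub_mem _
          (Submodule.smul_mem _ _ (Submodule.subset_span ⟨d + 1, hd, rfl⟩))
          (Submodule.smul_mem _ _ hp), ?_⟩
      rw [map_sub, map_smul, map_smul, hap]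
      simp only [LinearMap.add_apply, LinearMap.smul_apply, Module.End.one_apply, Dop_X_pow]
      rw [smul_add, smul_smul c⁻¹ c, inv_mul_cancel₀ hc, one_smul, smul_smul]
      abel

lemma span_le_map_pow (c : ℚ) (hc : c ≠ 0) (r k : ℕ) :
    Submodule.span ℚ {f : ℚ⟦X⟧ | ∃ e < r, f = X ^ e} ≤
      Submodule.map ((Dop + c • (1 : Module.End ℚ ℚ⟦X⟧)) ^ k)
        (Submodule.span ℚ {f : ℚ⟦X⟧ | ∃ e < r, f = X ^ e}) := by
  set V := Submodule.span ℚ {f : ℚ⟦X⟧ | ∃ e < r, f = X ^ e}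
  have h1 : V ≤ Submodule.map (Dop + c • (1 : Module.End ℚ ℚ⟦X⟧)) V := by
    rw [Submodule.span_le]
    rintro f ⟨e, he, rfl⟩
    exact surj_step c hc r e he
  induction k with
  | zero =>
      intro f hf
      exact ⟨f, hf, rfl⟩
  | succ k ih =>
      calc V ≤ Submodule.map ((Dop + c • (1 : Module.End ℚ ℚ⟦X⟧)) ^ k) V := ih
        _ ≤ Submodule.map ((Dop + c • (1 : Module.End ℚ ℚ⟦X⟧)) ^ k)
              (Submodule.map (Dop + c • (1 : Module.End ℚ ℚ⟦X⟧)) V) := Submodule.map_mono h1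
        _ = Submodule.map ((Dop + c • (1 : Module.End ℚ ℚ⟦X⟧)) ^ (k + 1)) V := by
              rw [pow_succ, ← Submodule.map_comp]; rfl

lemma comm_ops (a b : ℚ) (r : ℕ) :
    Commute ((Dop - a • (1 : Module.End ℚ ℚ⟦X⟧)) ^ r)
      ((Dop - b • (1 : Module.End ℚ ℚ⟦X⟧)) ^ r) := by
  apply Commute.pow_pow
  have h1 : Commute Dop (a • (1 : Module.End ℚ ℚ⟦X⟧)) := (Commute.one_right Dop).smul_right a
  have h2 : Commute Dop (b • (1 : Module.End ℚ ℚ⟦X⟧)) := (Commute.one_right Dop).smul_right b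
  have h3 : Commute (a • (1 : Module.End ℚ ℚ⟦X⟧)) (b • (1 : Module.End ℚ ℚ⟦X⟧)) :=
    ((Commute.one_left _).smul_right b).smul_left a
  exact ((Commute.refl Dop).sub_right h2).sub_left (h1.symm.sub_right h3)

lemma flatMap_cast (l : List ℕ) :
    (l.flatMap fun a => [(a : ℚ)]) = l.map (fun (a : ℕ) => (a : ℚ)) := by
  induction l with
  | nil => rfl
  | cons a l ih => simp_all

lemma prod_norm (j r : ℕ) :
    (((List.range j).map
        (fun a => (Dop - (a : ℚ) • (1 : Module.End ℚ (PowerSeries ℚ))) ^ r)).prod)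
    = (((List.range j).map
        (fun (a : ℕ) => (Dop - ((a : ℚ)) • (1 : Module.End ℚ (PowerSeries ℚ))) ^ r)).prod) := by
  rw [show (do let a ← List.range j; pure ((a : ℕ) : ℚ))
        = (List.range j).map (fun (a : ℕ) => (a : ℚ)) from by simpa using flatMap_cast (List.range j), List.map_map]
  rfl

lemma prod_succ (j r : ℕ) :
    (((List.range (j + 1)).map
        (fun (a : ℕ) => (Dop - ((a : ℚ)) • (1 : Module.End ℚ (PowerSeries ℚ))) ^ r)).prod)
    = (((List.range j).map
        (fun (a : ℕ) => (Dop - ((a : ℚ)) • (1 : Module.End ℚ (PowerSeries ℚ))) ^ r)).prod)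
      * (Dop - ((j : ℚ)) • (1 : Module.End ℚ (PowerSeries ℚ))) ^ r := by
  rw [List.range_succ, List.map_append, List.prod_append, List.map_singleton,
    List.prod_singleton]

lemma ker_le_prod (r : ℕ) : ∀ (j a : ℕ), a < j →
    LinearMap.ker ((Dop - (a : ℚ) • (1 : Module.End ℚ ℚ⟦X⟧)) ^ r) ≤
      LinearMap.ker (((List.range j).map
        (fun (a : ℕ) => (Dop - (a : ℚ) • (1 : Module.End ℚ (PowerSeries ℚ))) ^ r)).prod) := by
  intro j
  induction j with
  | zero => omega
  | succ j ih =>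
      intro a ha f hf
      rw [LinearMap.mem_ker, prod_succ, Module.End.mul_apply]
      rw [LinearMap.mem_ker] at hf
      rcases Nat.lt_succ_iff_lt_or_eq.mp ha with h | rfl
      · have hcomm := comm_ops (j : ℚ) (a : ℚ) r
        have h0 : ((Dop - (a : ℚ) • (1 : Module.End ℚ ℚ⟦X⟧)) ^ r)
            (((Dop - (j : ℚ) • (1 : Module.End ℚ ℚ⟦X⟧)) ^ r) f) = 0 := by
          rw [← Module.End.mul_apply, ← hcomm.eq, Module.End.mul_apply, hf, map_zero]
        exact ih a h (LinearMap.mem_ker.mpr h0)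
      · rw [hf, map_zero]

lemma Wsurj (r j : ℕ) :
    Submodule.span ℚ {f : ℚ⟦X⟧ | ∃ d < r, ∃ a < j, f = X ^ d * Eexp (a : ℚ)} ≤
      Submodule.map ((Dop - (j : ℚ) • (1 : Module.End ℚ ℚ⟦X⟧)) ^ r)
        (Submodule.span ℚ {f : ℚ⟦X⟧ | ∃ d < r, ∃ a < j, f = X ^ d * Eexp (a : ℚ)}) := by
  rw [Submodule.span_le]
  rintro f ⟨d, hd, a, ha, rfl⟩
  have hc : ((a : ℚ) - (j : ℚ)) ≠ 0 := sub_ne_zero.mpr (by exact_mod_cast Nat.ne_of_lt ha)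
  obtain ⟨p, hp, hap⟩ :=
    span_le_map_pow ((a : ℚ) - (j : ℚ)) hc r r (Submodule.subset_span ⟨d, hd, rfl⟩)
  refine ⟨Eexp (a : ℚ) * p, ?_, ?_⟩
  · have himg := mul_mem_span_image (a := (a : ℚ)) hp
    have hsub : Submodule.span ℚ ((fun x => Eexp (a : ℚ) * x) '' {f : ℚ⟦X⟧ | ∃ e < r, f = X ^ e})
        ≤ Submodule.span ℚ {f : ℚ⟦X⟧ | ∃ d < r, ∃ a' < j, f = X ^ d * Eexp (a' : ℚ)} := by
      rw [Submodule.span_le]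
      rintro x ⟨y, ⟨e, he, rfl⟩, rfl⟩
      exact Submodule.subset_span ⟨e, he, a, ha, mul_comm _ _⟩
    exact hsub himg
  · rw [DconjPow, hap, mul_comm]

theorem ker_binom_pow_derivative' (r j : ℕ) :
    LinearMap.ker
        (((List.range j).map
            (fun (a : ℕ) => (Dop - (a : ℚ) • (1 : Module.End ℚ (PowerSeries ℚ))) ^ r)).prod) =
      Submodule.span ℚ
        {f : PowerSeries ℚ | ∃ d < r, ∃ a < j, f = X ^ d * Eexp (a : ℚ)} := by
  induction j with
  | zero =>
      rw [List.range_zero, List.map_nil, List.prod_nil]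
      have hempty : {f : ℚ⟦X⟧ | ∃ d < r, ∃ a : ℕ, a < 0 ∧ f = X ^ d * Eexp (a : ℚ)} = ∅ :=
        Set.eq_empty_iff_forall_notMem.mpr (by rintro f ⟨d, hd, a, ha, rfl⟩; omega)
      rw [hempty, Submodule.span_empty]
      ext f
      simp [LinearMap.mem_ker, Module.End.one_apply]
  | succ j ih =>
      apply le_antisymm
      · intro f hf
        rw [LinearMap.mem_ker, prod_succ, Module.End.mul_apply] at hf
        have hQf : ((Dop - ((j : ℚ)) • (1 : Module.End ℚ ℚ⟦X⟧)) ^ r) f ∈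
            Submodule.span ℚ {g : ℚ⟦X⟧ | ∃ d < r, ∃ a < j, g = X ^ d * Eexp (a : ℚ)} := by
          rw [← ih]
          exact LinearMap.mem_ker.mpr hf
        obtain ⟨h, hh, hQh⟩ := Wsurj r j hQf
        have hker : f - h ∈
            LinearMap.ker ((Dop - ((j : ℚ)) • (1 : Module.End ℚ ℚ⟦X⟧)) ^ r) := by
          rw [LinearMap.mem_ker, map_sub, hQh, sub_self]
        rw [ker_shift] at hker
        have h1 : f - h ∈ Submodule.span ℚ
            {g : ℚ⟦X⟧ | ∃ d < r, ∃ a < j + 1, g = X ^ d * Eexp (a : ℚ)} := by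
          refine Submodule.span_mono ?_ hker
          rintro x ⟨d, hd, rfl⟩
          exact ⟨d, hd, j, Nat.lt_succ_self j, rfl⟩
        have h2 : h ∈ Submodule.span ℚ
            {g : ℚ⟦X⟧ | ∃ d < r, ∃ a < j + 1, g = X ^ d * Eexp (a : ℚ)} := by
          refine Submodule.span_mono ?_ hh
          rintro x ⟨d, hd, a, ha, rfl⟩
          exact ⟨d, hd, a, by omega, rfl⟩
        have := Submodule.add_mem _ h1 h2
        rwa [sub_add_cancel] at this
      · rw [Submodule.span_le]
        rintro g ⟨d, hd, a, ha, rfl⟩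
        have h1 : (X : ℚ⟦X⟧) ^ d * Eexp (a : ℚ) ∈
            LinearMap.ker ((Dop - (a : ℚ) • (1 : Module.End ℚ ℚ⟦X⟧)) ^ r) := by
          rw [ker_shift]
          exact Submodule.subset_span ⟨d, hd, rfl⟩
        exact ker_le_prod r (j + 1) a ha h1


/-- The kernel in `ℚ⟦u⟧` of the operator `∏_{a=0}^{j-1} (D - a·id)^r`
(a nonzero scalar multiple of `binom(D, j)^r`) is exactly the `ℚ`-span of the power series
`u^d · exp(a·u)` for `d < r` and `a < j`. -/
theorem ker_binom_pow_derivative (j r : ℕ) :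
    LinearMap.ker
        (((List.range j).map
            (fun a => (Dop - (a : ℚ) • (1 : Module.End ℚ (PowerSeries ℚ))) ^ r)).prod) =
      Submodule.span ℚ
        {f : PowerSeries ℚ | ∃ d < r, ∃ a < j,
          f = PowerSeries.X ^ d * PowerSeries.rescale (a : ℚ) (PowerSeries.exp ℚ)} := by
  rw [prod_norm]
  exact ker_binom_pow_derivative' r j
end

section
/- Fix r ≥ 1 and k ≥ 1 with |A| ≤ k. Let E_{>k} ⊆ Λ be the ideal generated by { e_m : m > k }, let U ⊆ Λ be the ideal generated by { uₙ : n ≥ 1 }, and let ι_k : ℚ[x₁, …, x_k] → Λ/E_{>k} be the ℚ-algebra homomorphism sending x_i to the class of p_i. Then the preimage under ι_k of the image of U^r in Λ/E_{>k} is exactly the ideal (x₁ − s₁, …, x_k − s_k)^r of ℚ[x₁, …, x_k], where s_i := ∑_{d | i} d·a_d. -/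
noncomputable section

/-- The ring of symmetric functions, modelled as the polynomial ring `ℚ[p₁, p₂, …]`
in countably many variables indexed by positive integers (the power sums). -/
abbrev SymmFn : Type := MvPolynomial ℕ+ ℚ

/-- The power sum `pₙ` (for `n ≥ 1`; junk value `0` for `n = 0`). -/
def pSym (n : ℕ) : SymmFn :=
  if h : 0 < n then MvPolynomial.X (⟨n, h⟩ : ℕ+) else 0

/-- The elementary symmetric functions, defined by `e₀ = 1` and Newton's recursion
`n·eₙ = ∑_{i=1}^{n} (−1)^{i−1} pᵢ e_{n−i}`. -/
def eSym : ℕ → SymmFn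
  | 0 => 1
  | n + 1 =>
      ((n + 1 : ℚ))⁻¹ •
        ∑ j ∈ Finset.range (n + 1), ((-1 : ℚ) ^ j) • (pSym (j + 1) * eSym (n - j))
  termination_by n => n
  decreasing_by exact Nat.lt_succ_of_le (Nat.sub_le _ _)

/-- `∑_{d | n} d·a_d` as a rational number. -/
def divSum (a : ℕ →₀ ℕ) (n : ℕ) : ℚ :=
  ((∑ d ∈ n.divisors, d * a d : ℕ) : ℚ)

/-- `uₙ = pₙ − ∑_{d | n} d·a_d`. -/
def uSym (a : ℕ →₀ ℕ) (n : ℕ) : SymmFn :=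
  pSym n - MvPolynomial.C (divSum a n)

/-- The ideal `E_{>k}` of `Λ` generated by the `e_m` with `m > k`. -/
def Egt (k : ℕ) : Ideal SymmFn :=
  Ideal.span {x : SymmFn | ∃ m : ℕ, k < m ∧ x = eSym m}

/-- The ideal `U` of `Λ` generated by the `uₙ`, `n ≥ 1`. -/
def Uideal (a : ℕ →₀ ℕ) : Ideal SymmFn :=
  Ideal.span {x : SymmFn | ∃ n : ℕ, 0 < n ∧ x = uSym a n}

/-- The `ℚ`-algebra homomorphism `ι_k : ℚ[x₁, …, x_k] → Λ/E_{>k}` sending `x_i` to the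
class of the power sum `p_i`. -/
def iotaK (k : ℕ) : MvPolynomial (Fin k) ℚ →ₐ[ℚ] SymmFn ⧸ Egt k :=
  MvPolynomial.aeval fun i : Fin k => Ideal.Quotient.mk (Egt k) (pSym ((i : ℕ) + 1))


section Structural
open MvPolynomial


lemma aeval_pSym {R} [CommRing R] [Algebra ℚ R] (f : ℕ+ → R) {n : ℕ} (h : 0 < n) :
    aeval f (pSym n) = f ⟨n, h⟩ := by rw [pSym, dif_pos h]; exact aeval_X _ _

lemma aeval_eSym_congr {R} [CommRing R] [Algebra ℚ R] (f g : ℕ+ → R) (n : ℕ)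
    (h : ∀ m : ℕ+, (m : ℕ) ≤ n → f m = g m) : aeval f (eSym n) = aeval g (eSym n) := by
  induction n using Nat.strong_induction_on with
  | _ n ih =>
    match n with
    | 0 => rw [eSym]; simp
    | n + 1 =>
      rw [eSym, map_smul, map_smul, map_sum, map_sum]
      congr 1
      refine Finset.sum_congr rfl fun j hj => ?_
      rw [Finset.mem_range] at hj
      rw [map_smul, map_smul, map_mul, map_mul,
        aeval_pSym f (Nat.succ_pos j), aeval_pSym g (Nat.succ_pos j),
        h ⟨j+1, Nat.succ_pos j⟩ (by show j + 1 ≤ n + 1; omega),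
        ih (n - j) (by omega) (fun m hm => h m (by omega))]

def qF (k : ℕ) : ℕ → MvPolynomial (Fin k) ℚ
  | n =>
    if h : 0 < n ∧ n ≤ k then MvPolynomial.X ⟨n - 1, by omega⟩
    else if h2 : k < n then
      ((-1:ℚ)^(n-1)) • (0 - ∑ j ∈ (Finset.range (n-1)).attach,
        ((-1:ℚ)^(j:ℕ)) • (qF k ((j:ℕ)+1) *
          MvPolynomial.aeval (fun m : ℕ+ => if hm : (m:ℕ) < n then qF k m else 0)
            (eSym (n-1-(j:ℕ)))))
    else 0
  termination_by n => n
  decreasing_by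
  · have := j.2; rw [Finset.mem_range] at this; omega
  · exact hm

def psiF (k : ℕ) : SymmFn →ₐ[ℚ] MvPolynomial (Fin k) ℚ :=
  aeval (fun m : ℕ+ => qF k (m : ℕ))

lemma psiF_pSym (k : ℕ) {n : ℕ} (h : 0 < n) : psiF k (pSym n) = qF k n :=
  aeval_pSym _ h

lemma qF_le (k : ℕ) {n : ℕ} (h1 : 0 < n) (h2 : n ≤ k) :
    qF k n = MvPolynomial.X ⟨n - 1, by omega⟩ := by
  rw [qF, dif_pos ⟨h1, h2⟩]

lemma trunc_aeval (k : ℕ) {t n : ℕ} (h : t < n) :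
    MvPolynomial.aeval (fun m : ℕ+ => if hm : (m:ℕ) < n then qF k (m:ℕ) else 0) (eSym t)
      = psiF k (eSym t) :=
  aeval_eSym_congr _ _ t (fun m hm => by rw [dif_pos (by omega)])

lemma qF_gt (k : ℕ) {n : ℕ} (h2 : k < n) :
    qF k n = ((-1:ℚ)^(n-1)) • (0 - ∑ j ∈ Finset.range (n-1),
      ((-1:ℚ)^j) • (qF k (j+1) * psiF k (eSym (n-1-j)))) := by
  rw [qF, dif_neg (by omega), dif_pos h2]
  congr 2
  rw [Finset.sum_attach (Finset.range (n-1))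
    (fun j => ((-1:ℚ)^j) • (qF k (j+1) *
      MvPolynomial.aeval (fun m : ℕ+ => if hm : (m:ℕ) < n then qF k (m:ℕ) else 0)
        (eSym (n-1-j))))]
  exact Finset.sum_congr rfl fun j hj => by rw [trunc_aeval k (by omega)]

lemma psiF_eSym_zero (k : ℕ) {n : ℕ} (h : k < n) : psiF k (eSym n) = 0 := by
  obtain ⟨m, rfl⟩ : ∃ m, n = m + 1 := ⟨n - 1, by omega⟩
  rw [eSym, map_smul, map_sum]
  have hsum : ∀ j ∈ Finset.range (m+1),
      (psiF k) (((-1:ℚ)^j) • (pSym (j+1) * eSym (m-j)))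
        = ((-1:ℚ)^j) • (qF k (j+1) * psiF k (eSym (m-j))) := fun j hj => by
    rw [map_smul, map_mul, psiF_pSym k (Nat.succ_pos j)]
  rw [Finset.sum_congr rfl hsum, Finset.sum_range_succ]
  have h0 : psiF k (eSym 0) = 1 := by rw [eSym]; simp
  rw [Nat.sub_self, h0, mul_one, qF_gt k h]
  have : (m + 1 : ℕ) - 1 = m := by omega
  rw [this, smul_smul, ← mul_pow]
  norm_num

lemma newton_sum (m : ℕ) :
    ∑ j ∈ Finset.range (m+1), ((-1:ℚ)^j) • (pSym (j+1) * eSym (m-j))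
      = ((m+1:ℚ)) • eSym (m+1) := by
  conv_rhs => rw [eSym]
  rw [smul_smul, mul_inv_cancel₀ (by positivity), one_smul]

lemma pSym_succ (m : ℕ) :
    pSym (m+1) = ((-1:ℚ)^m) • (((m+1:ℚ)) • eSym (m+1)
      - ∑ j ∈ Finset.range m, ((-1:ℚ)^j) • (pSym (j+1) * eSym (m-j))) := by
  have h := newton_sum m
  rw [Finset.sum_range_succ] at h
  have h0 : eSym 0 = 1 := by rw [eSym]
  rw [Nat.sub_self, h0, mul_one] at h
  have : ((-1:ℚ)^m) • pSym (m+1) = ((m+1:ℚ)) • eSym (m+1)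
      - ∑ j ∈ Finset.range m, ((-1:ℚ)^j) • (pSym (j+1) * eSym (m-j)) := by
    rw [← h]; abel
  rw [← this, smul_smul, ← mul_pow]; norm_num

abbrev mkE (k : ℕ) : SymmFn →ₐ[ℚ] SymmFn ⧸ Egt k := Ideal.Quotient.mkₐ ℚ (Egt k)

lemma mkE_eSym_zero (k : ℕ) {n : ℕ} (h : k < n) : mkE k (eSym n) = 0 := by
  rw [Ideal.Quotient.mkₐ_eq_mk, Ideal.Quotient.eq_zero_iff_mem]
  exact Ideal.subset_span ⟨n, h, rfl⟩

lemma pSym_pnat (m : ℕ+) : pSym (m : ℕ) = MvPolynomial.X m :=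
  dif_pos m.2

lemma psiF_X (k : ℕ) (m : ℕ+) : psiF k (MvPolynomial.X m) = qF k (m : ℕ) :=
  aeval_X _ m

lemma hcomp_iota_psi (k : ℕ) (x : SymmFn) :
    iotaK k (psiF k x) = aeval (fun m : ℕ+ => iotaK k (qF k (m : ℕ))) x := by
  conv_lhs => rw [show (iotaK k) (psiF k x) = ((iotaK k).comp (psiF k)) x from rfl,
    MvPolynomial.aeval_unique ((iotaK k).comp (psiF k))]
  congr 1
  congr 1
  funext m
  show iotaK k (psiF k (MvPolynomial.X m)) = _
  rw [psiF_X]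

lemma hcomp_mkE (k : ℕ) (x : SymmFn) :
    mkE k x = aeval (fun m : ℕ+ => mkE k (MvPolynomial.X m)) x := by
  conv_lhs => rw [MvPolynomial.aeval_unique (mkE k)]
  rfl

lemma iota_qF (k : ℕ) : ∀ n : ℕ, 0 < n → iotaK k (qF k n) = mkE k (pSym n) := by
  intro n
  induction n using Nat.strong_induction_on with
  | _ n ih =>
    intro hn
    by_cases hnk : n ≤ k
    · rw [qF_le k hn hnk]
      show aeval _ (MvPolynomial.X _) = _
      rw [aeval_X]
      have : n - 1 + 1 = n := by omega
      rw [Ideal.Quotient.mkₐ_eq_mk, this]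
    · push_neg at hnk
      have hn1 : n - 1 + 1 = n := by omega
      have hterm : ∀ j ∈ Finset.range (n-1),
          iotaK k (((-1:ℚ)^j) • (qF k (j+1) * psiF k (eSym (n-1-j))))
            = ((-1:ℚ)^j) • (mkE k (pSym (j+1)) * mkE k (eSym (n-1-j))) := by
        intro j hj
        rw [Finset.mem_range] at hj
        rw [map_smul, map_mul, ih (j+1) (by omega) (Nat.succ_pos j)]
        congr 2
        rw [hcomp_iota_psi, hcomp_mkE]
        refine aeval_eSym_congr _ _ _ (fun m hm => ?_)
        rw [ih (m : ℕ) (by omega) m.2, ← pSym_pnat]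
      rw [qF_gt k hnk, map_smul, map_sub, map_zero, map_sum,
        Finset.sum_congr rfl hterm]
      conv_rhs => rw [← hn1, pSym_succ (n-1)]
      rw [map_smul, map_sub, map_smul, hn1, mkE_eSym_zero k hnk, smul_zero]
      congr 2
      rw [map_sum]
      exact Finset.sum_congr rfl fun j hj => by rw [map_smul, map_mul]

lemma iota_psi_comp (k : ℕ) : (iotaK k).comp (psiF k) = mkE k := by
  apply MvPolynomial.algHom_ext
  intro m
  show iotaK k (psiF k (MvPolynomial.X m)) = mkE k (MvPolynomial.X m)
  rw [psiF_X, iota_qF k (m : ℕ) m.2, pSym_pnat]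

lemma iota_psi_apply (k : ℕ) (f : SymmFn) : iotaK k (psiF k f) = mkE k f :=
  congrArg (fun φ => φ f) (iota_psi_comp k) |>.trans rfl

def psiBar (k : ℕ) : (SymmFn ⧸ Egt k) →ₐ[ℚ] MvPolynomial (Fin k) ℚ :=
  Ideal.Quotient.liftₐ (Egt k) (psiF k) (by
    intro a ha
    refine Submodule.span_induction ?_ ?_ ?_ ?_ ha
    · rintro x ⟨m, hm, rfl⟩
      exact psiF_eSym_zero k hm
    · exact map_zero _
    · intro x y _ _ hx hy; rw [map_add, hx, hy, add_zero]
    · intro r x _ hx; rw [smul_eq_mul, map_mul, hx, mul_zero])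

lemma psiBar_mk (k : ℕ) (f : SymmFn) : psiBar k (mkE k f) = psiF k f := by
  simp [psiBar, mkE]
  rfl

lemma psiBar_iota (k : ℕ) (g : MvPolynomial (Fin k) ℚ) : psiBar k (iotaK k g) = g := by
  have h : (psiBar k).comp (iotaK k) = AlgHom.id ℚ _ := by
    apply MvPolynomial.algHom_ext
    intro i
    show psiBar k (iotaK k (MvPolynomial.X i)) = MvPolynomial.X i
    have h1 : iotaK k (MvPolynomial.X i) = mkE k (pSym ((i : ℕ) + 1)) := aeval_X _ i
    rw [h1, psiBar_mk, psiF_pSym k (Nat.succ_pos _), qF_le k (Nat.succ_pos _) i.2]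
    rfl
  exact congrArg (fun φ => φ g) h |>.trans rfl

lemma iota_bijective (k : ℕ) : Function.Bijective (iotaK k) := by
  constructor
  · exact Function.LeftInverse.injective (psiBar_iota k)
  · intro y
    obtain ⟨f, rfl⟩ := Ideal.Quotient.mk_surjective (I := Egt k) y
    exact ⟨psiF k f, iota_psi_apply k f⟩

end Structural

section PS
open PowerSeries


def Pd (d : ℕ) : ℚ⟦X⟧ :=
  PowerSeries.mk fun m => if m ≠ 0 ∧ d ∣ m then -(d:ℚ) * (-1)^m else 0

def gd (d : ℕ) : ℚ⟦X⟧ := 1 - (-PowerSeries.X)^d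

lemma neg_X_pow (d : ℕ) :
    (-X : ℚ⟦X⟧)^d = PowerSeries.C ((-1:ℚ)^d) * X^d := by
  rw [neg_pow, map_pow, map_neg, map_one]

lemma arithPd {d m : ℕ} (hd : 0 < d) (hm : 0 < m) :
    (0 - (-1:ℚ)^d * (if m = d then 1 else 0)) * (m:ℚ)
      = (if m ≠ 0 ∧ d ∣ m then -(d:ℚ) * (-1)^m else 0)
        - (-1:ℚ)^d * (if d ≤ m then
            (if m - d ≠ 0 ∧ d ∣ m - d then -(d:ℚ)*(-1)^(m-d) else 0) else 0) := by
  have hpow : ∀ {u v : ℕ}, u ≤ v → (-1:ℚ)^u * (-1:ℚ)^(v-u) = (-1:ℚ)^v := by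
    intro u v huv; rw [← pow_add]; congr 1; omega
  by_cases h1 : m = d
  · subst h1
    have : ¬(m - m ≠ 0 ∧ m ∣ m - m) := by simp
    simp [this, hm.ne', Nat.cast_pos.mpr hm]
    ring
  · rw [if_neg h1, mul_zero, sub_zero, zero_mul]
    by_cases h2 : d ∣ m
    · have hdm : d < m := lt_of_le_of_ne (Nat.le_of_dvd hm h2) (fun h => h1 h.symm)
      have h3 : m - d ≠ 0 := by omega
      have h4 : d ∣ m - d := (Nat.dvd_sub h2 dvd_rfl)
      rw [if_pos ⟨hm.ne', h2⟩, if_pos hdm.le, if_pos ⟨h3, h4⟩]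
      have := hpow hdm.le
      nlinarith [hpow hdm.le]
    · have h5 : ¬(m ≠ 0 ∧ d ∣ m) := by tauto
      have h6 : ∀ (_ : d ≤ m), ¬(m - d ≠ 0 ∧ d ∣ m - d) := by
        rintro hdm ⟨_, hdvd⟩
        exact h2 (by have := Nat.dvd_add hdvd (dvd_refl d); rwa [Nat.sub_add_cancel hdm] at this)
      rw [if_neg h5]
      split_ifs with hdm h7
      · exact ((h6 hdm) h7).elim
      · simp
      · simp

lemma lgd {d : ℕ} (hd : 0 < d) :
    PowerSeries.X * (d⁄dX ℚ (gd d)) = Pd d * gd d := by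
  have hprod : Pd d * gd d
      = Pd d - PowerSeries.C ((-1:ℚ)^d) * (X^d * Pd d) := by
    rw [gd, neg_X_pow]; ring
  ext n
  rcases n with _ | n
  · rw [coeff_zero_X_mul, hprod, map_sub, PowerSeries.coeff_C_mul,
      PowerSeries.coeff_X_pow_mul']
    rw [if_neg (by omega), mul_zero, sub_zero, Pd, coeff_mk, if_neg (by simp)]
  · rw [coeff_succ_X_mul, PowerSeries.coeff_derivative, hprod, map_sub,
      PowerSeries.coeff_C_mul, PowerSeries.coeff_X_pow_mul']
    rw [gd, neg_X_pow, map_sub, PowerSeries.coeff_one, PowerSeries.coeff_C_mul,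
      coeff_X_pow, Pd, coeff_mk, coeff_mk]
    rw [if_neg (show ¬(n+1=0) by omega)]
    have h := arithPd hd (Nat.succ_pos n)
    push_cast at h ⊢
    exact h

lemma lpow {g P : ℚ⟦X⟧} (h : X * d⁄dX ℚ g = P * g) (e : ℕ) :
    X * d⁄dX ℚ (g^e) = ((e:ℚ⟦X⟧) * P) * g^e := by
  cases e with
  | zero => simp
  | succ e =>
    rw [Derivation.leibniz_pow, Nat.succ_sub_one]
    have h1 : X * ((e+1 : ℕ) • g ^ e • d⁄dX ℚ g)
        = ((e+1:ℕ):ℚ⟦X⟧) * g^e * (X * d⁄dX ℚ g) := by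
      rw [nsmul_eq_mul, smul_eq_mul]; ring
    rw [h1, h]
    push_cast
    ring

lemma lprod (S : Finset ℕ) (g P : ℕ → ℚ⟦X⟧)
    (h : ∀ d ∈ S, X * d⁄dX ℚ (g d) = P d * g d) :
    X * d⁄dX ℚ (∏ d ∈ S, g d) = (∑ d ∈ S, P d) * ∏ d ∈ S, g d := by
  classical
  induction S using Finset.induction_on with
  | empty => simp
  | insert c s hd ih =>
    rw [Finset.prod_insert hd, Finset.sum_insert hd, Derivation.leibniz]
    have h1 : X * (g c • d⁄dX ℚ (∏ d ∈ s, g d) + (∏ d ∈ s, g d) • d⁄dX ℚ (g c))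
        = g c * (X * d⁄dX ℚ (∏ d ∈ s, g d)) + (∏ d ∈ s, g d) * (X * d⁄dX ℚ (g c)) := by
      rw [smul_eq_mul, smul_eq_mul]; ring
    rw [h1, ih (fun d hds => h d (Finset.mem_insert_of_mem hds)),
      h c (Finset.mem_insert_self c s)]
    ring

def Fps (a : ℕ →₀ ℕ) : ℚ⟦X⟧ := ∏ d ∈ a.support, gd d ^ (a d)
def Pps (a : ℕ →₀ ℕ) : ℚ⟦X⟧ := ∑ d ∈ a.support, PowerSeries.C ((a d : ℚ)) * Pd d

lemma supp_pos {a : ℕ →₀ ℕ} (ha0 : a 0 = 0) {d : ℕ} (hd : d ∈ a.support) : 0 < d := by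
  rcases Nat.eq_zero_or_pos d with h | h
  · subst h; exact absurd ha0 (Finsupp.mem_support_iff.mp hd)
  · exact h

lemma lF (a : ℕ →₀ ℕ) (ha0 : a 0 = 0) :
    X * d⁄dX ℚ (Fps a) = Pps a * Fps a := by
  refine lprod _ _ _ (fun d hd => ?_)
  exact lpow (lgd (supp_pos ha0 hd)) (a d)

lemma divisor_sum_eq (a : ℕ →₀ ℕ) {m : ℕ} (hm : m ≠ 0) :
    ∑ d ∈ a.support.filter (· ∣ m), d * a d = ∑ d ∈ m.divisors, d * a d := by
  refine Finset.sum_subset ?_ ?_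
  · intro d hd
    rw [Finset.mem_filter] at hd
    exact Nat.mem_divisors.mpr ⟨hd.2, hm⟩
  · intro d hd hnd
    rw [Finset.mem_filter, not_and] at hnd
    have : d ∉ a.support := fun hs => hnd hs (Nat.mem_divisors.mp hd).1
    rw [Finsupp.notMem_support_iff.mp this, mul_zero]

lemma coeff_Pps_zero (a : ℕ →₀ ℕ) : coeff 0 (Pps a) = 0 := by
  rw [Pps, map_sum]
  refine Finset.sum_eq_zero fun d _ => ?_
  rw [PowerSeries.coeff_C_mul, Pd, coeff_mk, if_neg (by simp), mul_zero]

lemma coeff_Pps (a : ℕ →₀ ℕ) {m : ℕ} (hm : 0 < m) :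
    coeff m (Pps a) = (-1:ℚ)^(m-1) * divSum a m := by
  rw [Pps, map_sum]
  have hterm : ∀ d ∈ a.support, coeff m (PowerSeries.C ((a d : ℚ)) * Pd d)
      = if d ∣ m then (-1:ℚ)^(m-1) * ((d * a d : ℕ) : ℚ) else 0 := by
    intro d _
    rw [PowerSeries.coeff_C_mul, Pd, coeff_mk]
    by_cases h : d ∣ m
    · rw [if_pos ⟨hm.ne', h⟩, if_pos h]
      have hp : (-1:ℚ)^m = -(-1:ℚ)^(m-1) := by
        conv_lhs => rw [show m = (m-1)+1 by omega]
        rw [pow_succ, mul_neg_one]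
      rw [hp]; push_cast; ring
    · rw [if_neg (by tauto), if_neg h, mul_zero]
  rw [Finset.sum_congr rfl hterm, Finset.sum_ite, Finset.sum_const_zero, add_zero,
    ← Finset.mul_sum]
  congr 1
  rw [divSum, ← divisor_sum_eq a hm.ne', Nat.cast_sum]

lemma coeff_F_rec (a : ℕ →₀ ℕ) (ha0 : a 0 = 0) (n : ℕ) :
    (coeff (n+1) (Fps a)) * ((n:ℚ)+1)
      = ∑ j ∈ Finset.range (n+1), (-1:ℚ)^j * divSum a (j+1) * coeff (n-j) (Fps a) := by
  have h1 := congrArg (coeff (n+1)) (lF a ha0)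
  rw [coeff_succ_X_mul, PowerSeries.coeff_derivative, PowerSeries.coeff_mul,
    Finset.Nat.sum_antidiagonal_eq_sum_range_succ_mk, Finset.sum_range_succ',
    coeff_Pps_zero, zero_mul, add_zero] at h1
  push_cast at h1
  rw [h1]
  refine Finset.sum_congr rfl fun j hj => ?_
  rw [coeff_Pps a (Nat.succ_pos j)]
  norm_num

lemma coeff_F_zero (a : ℕ →₀ ℕ) (ha0 : a 0 = 0) : coeff 0 (Fps a) = 1 := by
  rw [coeff_zero_eq_constantCoeff_apply, Fps, map_prod]
  refine Finset.prod_eq_one fun d hd => ?_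
  rw [map_pow, gd, map_sub, map_one, map_pow, map_neg, constantCoeff_X, neg_zero,
    zero_pow (supp_pos ha0 hd).ne', sub_zero, one_pow]

lemma coeff_F_high (a : ℕ →₀ ℕ) (ha0 : a 0 = 0) {n : ℕ}
    (h : (∑ i ∈ a.support, i * a i) < n) : coeff n (Fps a) = 0 := by
  classical
  set f : Polynomial ℚ := ∏ d ∈ a.support, (1 - (-Polynomial.X)^d)^(a d) with hf
  have hcoe : (f : ℚ⟦X⟧) = Fps a := by
    rw [hf, ← Polynomial.coeToPowerSeries.ringHom_apply, map_prod, Fps]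
    refine Finset.prod_congr rfl fun d _ => ?_
    rw [map_pow, map_sub, map_one, map_pow, map_neg,
      Polynomial.coeToPowerSeries.ringHom_apply, Polynomial.coe_X, gd]
  rw [← hcoe, Polynomial.coeff_coe]
  refine Polynomial.coeff_eq_zero_of_natDegree_lt (lt_of_le_of_lt ?_ h)
  refine le_trans (Polynomial.natDegree_prod_le _ _) ?_
  refine Finset.sum_le_sum fun d _ => ?_
  refine le_trans (Polynomial.natDegree_pow_le) ?_
  rw [mul_comm d (a d)]
  refine Nat.mul_le_mul_left (a d) ?_
  refine le_trans (Polynomial.natDegree_sub_le _ _) ?_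
  rw [Polynomial.natDegree_one]
  refine max_le (Nat.zero_le _) ?_
  refine le_trans (Polynomial.natDegree_pow_le) ?_
  rw [Polynomial.natDegree_neg, Polynomial.natDegree_X, mul_one]

end PS

section Glue
open MvPolynomial

def phiA (a : ℕ →₀ ℕ) : SymmFn →ₐ[ℚ] ℚ :=
  aeval (fun m : ℕ+ => divSum a (m : ℕ))

lemma phiA_pSym (a : ℕ →₀ ℕ) {n : ℕ} (hn : 0 < n) : phiA a (pSym n) = divSum a n :=
  aeval_pSym _ hn

lemma phiA_eSym (a : ℕ →₀ ℕ) (ha0 : a 0 = 0) :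
    ∀ n, phiA a (eSym n) = PowerSeries.coeff n (Fps a) := by
  intro n
  induction n using Nat.strong_induction_on with
  | _ n ih =>
    match n with
    | 0 =>
      rw [eSym, map_one, coeff_F_zero a ha0]
    | n + 1 =>
      rw [eSym, map_smul, map_sum]
      have hterm : ∀ j ∈ Finset.range (n+1),
          phiA a (((-1:ℚ)^j) • (pSym (j+1) * eSym (n-j)))
            = (-1:ℚ)^j * divSum a (j+1) * PowerSeries.coeff (n-j) (Fps a) := by
        intro j hj
        rw [map_smul, map_mul, phiA_pSym a (Nat.succ_pos j), ih (n-j) (by omega),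
          smul_eq_mul, mul_assoc]
      rw [Finset.sum_congr rfl hterm]
      have hrec := coeff_F_rec a ha0 n
      have hne : ((n:ℚ)+1) ≠ 0 := by positivity
      rw [smul_eq_mul, ← hrec]
      field_simp

lemma phiA_eSym_zero (a : ℕ →₀ ℕ) (ha0 : a 0 = 0) {k n : ℕ}
    (hA : ∑ i ∈ a.support, i * a i ≤ k) (h : k < n) : phiA a (eSym n) = 0 := by
  rw [phiA_eSym a ha0 n]
  exact coeff_F_high a ha0 (by omega)

def sEv (k : ℕ) (a : ℕ →₀ ℕ) : MvPolynomial (Fin k) ℚ →ₐ[ℚ] ℚ :=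
  aeval (fun i : Fin k => divSum a ((i:ℕ)+1))

lemma sEv_X (k : ℕ) (a : ℕ →₀ ℕ) (i : Fin k) :
    sEv k a (MvPolynomial.X i) = divSum a ((i:ℕ)+1) := aeval_X _ i

lemma sEv_psiF (k : ℕ) (a : ℕ →₀ ℕ) (ha0 : a 0 = 0)
    (hA : ∑ i ∈ a.support, i * a i ≤ k) (f : SymmFn) :
    sEv k a (psiF k f) = phiA a f := by
  have hker : ∀ x ∈ Egt k, phiA a x = 0 := by
    intro x hx
    refine Submodule.span_induction ?_ ?_ ?_ ?_ hx
    · rintro y ⟨m, hm, rfl⟩; exact phiA_eSym_zero a ha0 hA hm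
    · exact map_zero _
    · intro u v _ _ hu hv; rw [map_add, hu, hv, add_zero]
    · intro r u _ hu; rw [smul_eq_mul, map_mul, hu, mul_zero]
  let phiB : (SymmFn ⧸ Egt k) →ₐ[ℚ] ℚ := Ideal.Quotient.liftₐ (Egt k) (phiA a) hker
  have hphiB : ∀ g, phiB (mkE k g) = phiA a g := fun g => by simp [phiB, mkE]; rfl
  have hcomp : phiB.comp (iotaK k) = sEv k a := by
    apply MvPolynomial.algHom_ext
    intro i
    show phiB (iotaK k (MvPolynomial.X i)) = sEv k a (MvPolynomial.X i)
    have h1 : iotaK k (MvPolynomial.X i)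
        = Ideal.Quotient.mk (Egt k) (pSym ((i:ℕ)+1)) := aeval_X _ i
    have h1' : iotaK k (MvPolynomial.X i) = mkE k (pSym ((i:ℕ)+1)) := h1
    rw [h1']
    rw [hphiB (pSym ((i:ℕ)+1))]
    rw [phiA_pSym a (Nat.succ_pos (i:ℕ)), sEv_X]
  calc sEv k a (psiF k f) = phiB (iotaK k (psiF k f)) :=
      (DFunLike.congr_fun hcomp (psiF k f)).symm
    _ = phiB (mkE k f) := by rw [iota_psi_apply]
    _ = phiA a f := hphiB f

def Mx (k : ℕ) (a : ℕ →₀ ℕ) : Ideal (MvPolynomial (Fin k) ℚ) :=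
  Ideal.span {g : MvPolynomial (Fin k) ℚ |
    ∃ i : Fin k, g = MvPolynomial.X i - MvPolynomial.C (divSum a ((i : ℕ) + 1))}

lemma mem_Mx_of_eval (k : ℕ) (a : ℕ →₀ ℕ) {g : MvPolynomial (Fin k) ℚ}
    (h : sEv k a g = 0) : g ∈ Mx k a := by
  have hQ : Ideal.Quotient.mkₐ ℚ (Mx k a)
      = (Algebra.ofId ℚ _).comp (sEv k a) := by
    apply MvPolynomial.algHom_ext
    intro i
    show Ideal.Quotient.mkₐ ℚ (Mx k a) (MvPolynomial.X i)
      = Algebra.ofId ℚ _ (sEv k a (MvPolynomial.X i))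
    have h1 : MvPolynomial.X i - MvPolynomial.C (divSum a ((i:ℕ)+1)) ∈ Mx k a :=
      Ideal.subset_span ⟨i, rfl⟩
    have h2 : Ideal.Quotient.mkₐ ℚ (Mx k a)
        (MvPolynomial.X i - MvPolynomial.C (divSum a ((i:ℕ)+1))) = 0 := by
      rw [Ideal.Quotient.mkₐ_eq_mk, Ideal.Quotient.eq_zero_iff_mem]; exact h1
    rw [map_sub, sub_eq_zero] at h2
    rw [h2, sEv_X]
    rw [Algebra.ofId_apply, ← MvPolynomial.algebraMap_eq]
    exact ((Ideal.Quotient.mkₐ ℚ (Mx k a)).commutes _).symm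
  have hz : Ideal.Quotient.mkₐ ℚ (Mx k a) g = 0 := by
    rw [hQ, AlgHom.comp_apply, h, map_zero]
  rwa [Ideal.Quotient.mkₐ_eq_mk, Ideal.Quotient.eq_zero_iff_mem] at hz

lemma phiA_C (a : ℕ →₀ ℕ) (c : ℚ) : phiA a (MvPolynomial.C c) = c := by
  simp [phiA]

lemma psiF_u_mem (k : ℕ) (a : ℕ →₀ ℕ) (ha0 : a 0 = 0)
    (hA : ∑ i ∈ a.support, i * a i ≤ k) {n : ℕ} (hn : 0 < n) :
    psiF k (uSym a n) ∈ Mx k a := by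
  refine mem_Mx_of_eval k a ?_
  rw [sEv_psiF k a ha0 hA, uSym, map_sub, phiA_pSym a hn, phiA_C, sub_self]

lemma iotaK_C (k : ℕ) (c : ℚ) :
    iotaK k (MvPolynomial.C c) = Ideal.Quotient.mk (Egt k) (MvPolynomial.C c) := by
  calc iotaK k (MvPolynomial.C c) = algebraMap ℚ _ c := by
        rw [← MvPolynomial.algebraMap_eq]; exact (iotaK k).commutes c
    _ = mkE k (MvPolynomial.C c) := by
        rw [← MvPolynomial.algebraMap_eq]; exact ((mkE k).commutes c).symm
    _ = Ideal.Quotient.mk (Egt k) (MvPolynomial.C c) := by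
        rw [Ideal.Quotient.mkₐ_eq_mk]

end Glue

/-- For `r, k ≥ 1` with `|A| ≤ k`, the preimage under
`ι_k : ℚ[x₁, …, x_k] → Λ/E_{>k}` of the image of `U^r` in `Λ/E_{>k}` is exactly the ideal
`(x₁ − s₁, …, x_k − s_k)^r`, where `s_i = ∑_{d | i} d·a_d`. -/
theorem comap_image_u_pow (a : ℕ →₀ ℕ) (ha0 : a 0 = 0) (r k : ℕ)
    (hr : 1 ≤ r) (hk : 1 ≤ k) (hA : ∑ i ∈ a.support, i * a i ≤ k) :
    Ideal.comap (iotaK k)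
        (Ideal.map (Ideal.Quotient.mk (Egt k)) ((Uideal a) ^ r)) =
      (Ideal.span {g : MvPolynomial (Fin k) ℚ |
        ∃ i : Fin k, g = MvPolynomial.X i - MvPolynomial.C (divSum a ((i : ℕ) + 1))}) ^ r := by
  classical
  have hbij := iota_bijective k
  have hmapU : Ideal.map (Ideal.Quotient.mk (Egt k)) (Uideal a)
      = Ideal.map (iotaK k) (Mx k a) := by
    apply le_antisymm
    · rw [Uideal, Ideal.map_span]
      refine Ideal.span_le.mpr ?_
      rintro y ⟨x, ⟨n, hn, rfl⟩, rfl⟩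
      have h1 : Ideal.Quotient.mk (Egt k) (uSym a n) = iotaK k (psiF k (uSym a n)) := by
        rw [iota_psi_apply, Ideal.Quotient.mkₐ_eq_mk]
      show Ideal.Quotient.mk (Egt k) (uSym a n) ∈ _
      rw [h1]
      exact Ideal.mem_map_of_mem _ (psiF_u_mem k a ha0 hA hn)
    · rw [Mx, Ideal.map_span]
      refine Ideal.span_le.mpr ?_
      rintro y ⟨g, ⟨i, rfl⟩, rfl⟩
      have h2 : iotaK k (MvPolynomial.X i - MvPolynomial.C (divSum a ((i:ℕ)+1)))
          = Ideal.Quotient.mk (Egt k) (uSym a ((i:ℕ)+1)) := by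
        rw [map_sub, iotaK_C, uSym, map_sub]
        congr 1
        exact MvPolynomial.aeval_X _ i
      show iotaK k _ ∈ _
      rw [h2]
      exact Ideal.mem_map_of_mem _
        (Ideal.subset_span ⟨(i:ℕ)+1, Nat.succ_pos _, rfl⟩)
  rw [Ideal.map_pow, hmapU, ← Ideal.map_pow, Ideal.comap_map_of_bijective _ hbij]
  rfl

end
end

section
/- Fix r ≥ 1 and k ≥ 1 with |A| ≤ k. Let E_{>k} ⊆ Λ be the ideal generated by { e_m : m > k } and U ⊆ Λ the ideal generated by { uₙ : n ≥ 1 }. Then the ℚ-algebra homomorphism ℚ[x₁, …, x_k] → Λ/(U^r + E_{>k}) sending x_i to the class of u_i is surjective with kernel equal to the ideal (x₁, …, x_k)^r; in particular it induces a ℚ-algebra isomorphism ℚ[x₁, …, x_k]/(x₁, …, x_k)^r ≅ Λ/(U^r + E_{>k}). -/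
noncomputable section

/-- The `ℚ`-algebra homomorphism `ℚ[x₁, …, x_k] → Λ/(U^r + E_{>k})` sending `x_i` to the
class of `u_i`. -/
def uQuotHom (a : ℕ →₀ ℕ) (r k : ℕ) :
    MvPolynomial (Fin k) ℚ →ₐ[ℚ] SymmFn ⧸ ((Uideal a) ^ r + Egt k) :=
  MvPolynomial.aeval fun i : Fin k =>
    Ideal.Quotient.mk ((Uideal a) ^ r + Egt k) (uSym a ((i : ℕ) + 1))


namespace Stmt9

set_option maxHeartbeats 1000000
set_option synthInstance.maxHeartbeats 400000

section PartOne

open Finset PowerSeries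


def LD (f g : ℚ⟦X⟧) : Prop := X * derivative ℚ f = g * f

lemma LD.mul {f g p q : ℚ⟦X⟧} (h1 : LD f p) (h2 : LD g q) : LD (f * g) (p + q) := by
  unfold LD at *
  rw [Derivation.leibniz, smul_eq_mul, smul_eq_mul, mul_add]
  calc X * (f * derivative ℚ g) + X * (g * derivative ℚ f)
      = f * (X * derivative ℚ g) + g * (X * derivative ℚ f) := by ring
    _ = f * (q * g) + g * (p * f) := by rw [h1, h2]
    _ = (p + q) * (f * g) := by ring

lemma LD.one : LD 1 0 := by
  unfold LD; simp

lemma LD.pow {f p : ℚ⟦X⟧} (h : LD f p) (m : ℕ) : LD (f ^ m) (m • p) := by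
  induction m with
  | zero => simpa using LD.one
  | succ n ih =>
      have h2 := ih.mul h
      rw [← pow_succ] at h2
      have h3 : (n : ℕ) • p + p = (n + 1) • p := by rw [succ_nsmul]
      rwa [h3] at h2

lemma LD.prod {ι : Type*} (s : Finset ι) (f g : ι → ℚ⟦X⟧) (h : ∀ i ∈ s, LD (f i) (g i)) :
    LD (∏ i ∈ s, f i) (∑ i ∈ s, g i) := by
  induction s using Finset.cons_induction with
  | empty => simpa using LD.one
  | cons i s hi ih =>
      rw [Finset.prod_cons, Finset.sum_cons]
      exact (h i (Finset.mem_cons_self i s)).mul (ih fun j hj => h j (Finset.mem_cons_of_mem hj))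

def Qd (d : ℕ) : ℚ⟦X⟧ :=
  PowerSeries.mk fun n => if d ∣ n ∧ n ≠ 0 then (d : ℚ) * (-1) ^ (n - 1) else 0

lemma coeff_fd (d m : ℕ) :
    (coeff m) ((1 : ℚ⟦X⟧) - (-X) ^ d) =
      (if m = 0 then 1 else 0) - (-1) ^ d * (if m = d then 1 else 0) := by
  have h : ((-X : ℚ⟦X⟧)) ^ d = C ((-1) ^ d) * X ^ d := by
    rw [neg_pow, map_pow, map_neg, map_one]
  rw [map_sub, h, coeff_C_mul, coeff_one, coeff_X_pow]

lemma LD_base (d : ℕ) : LD ((1 : ℚ⟦X⟧) - (-X) ^ d) (Qd d) := by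
  unfold LD
  ext n
  have hrhs : ∀ n : ℕ, (coeff n) (Qd d * ((1 : ℚ⟦X⟧) - (-X) ^ d)) =
      (coeff n) (Qd d) -
        (-1) ^ d * (if d ≤ n then (coeff (n - d)) (Qd d) else 0) := by
    intro n
    have h : ((-X : ℚ⟦X⟧)) ^ d = C ((-1) ^ d) * X ^ d := by
      rw [neg_pow, map_pow, map_neg, map_one]
    rw [mul_sub, mul_one, map_sub, h, show Qd d * (C ((-1) ^ d) * X ^ d)
        = C ((-1) ^ d) * (Qd d * X ^ d) by ring, coeff_C_mul, coeff_mul_X_pow']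
  rcases n with _ | m
  · rw [hrhs]
    simp [Qd]
  · rw [coeff_succ_X_mul, PowerSeries.coeff_derivative, coeff_fd, hrhs]
    simp only [Qd, coeff_mk]
    have hm0 : ¬ (m + 1 = 0) := by omega
    rw [if_neg hm0]
    by_cases hdm : d ∣ m + 1
    · have hd4 : d ≤ m + 1 := Nat.le_of_dvd (by omega) hdm
      have hc3 : d ∣ m + 1 ∧ m + 1 ≠ 0 := ⟨hdm, hm0⟩
      rw [if_pos hc3, if_pos hd4]
      by_cases hmd : m + 1 = d
      · have h5 : ¬ (d ∣ m + 1 - d ∧ m + 1 - d ≠ 0) := by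
          rintro ⟨-, hx⟩; omega
        rw [if_neg h5, if_pos hmd, ← hmd]
        rw [show m + 1 - 1 = m from rfl, pow_succ]
        push_cast
        ring
      · have h5c : d ∣ m + 1 - d := Nat.dvd_sub hdm dvd_rfl
        have h5n : m + 1 - d ≠ 0 := by
          have := lt_of_le_of_ne hd4 (fun hx => hmd hx.symm)
          omega
        have hc5 : d ∣ m + 1 - d ∧ m + 1 - d ≠ 0 := ⟨h5c, h5n⟩
        rw [if_pos hc5, if_neg hmd]
        have hexp : (-1 : ℚ) ^ d * ((d : ℚ) * (-1) ^ (m + 1 - d - 1)) = (d : ℚ) * (-1) ^ m := by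
          rw [show (-1 : ℚ) ^ d * ((d : ℚ) * (-1) ^ (m + 1 - d - 1))
              = (d : ℚ) * ((-1 : ℚ) ^ d * (-1) ^ (m + 1 - d - 1)) by ring, ← pow_add]
          congr 2
          omega
        rw [hexp, show m + 1 - 1 = m from rfl]
        ring
    · have h3 : ¬ (d ∣ m + 1 ∧ m + 1 ≠ 0) := fun h => hdm h.1
      have hmd : ¬ (m + 1 = d) := fun h => hdm (h ▸ dvd_rfl)
      rw [if_neg h3, if_neg hmd]
      rcases le_or_gt d (m + 1) with hle | hlt
      · have h5 : ¬ (d ∣ m + 1 - d ∧ m + 1 - d ≠ 0) := by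
          rintro ⟨h1, -⟩
          exact hdm (by
            have := Nat.dvd_add h1 (dvd_refl d)
            rwa [Nat.sub_add_cancel hle] at this)
        rw [if_pos hle, if_neg h5]
        ring
      · rw [if_neg (not_le.mpr hlt)]
        ring



/-- The polynomial `∏_d (1 - (-X)^d)^{a_d}`. -/
def Ppoly (a : ℕ →₀ ℕ) : Polynomial ℚ :=
  ∏ d ∈ a.support, ((1 : Polynomial ℚ) - (-Polynomial.X) ^ d) ^ (a d)

def gg (a : ℕ →₀ ℕ) (n : ℕ) : ℚ := (Ppoly a).coeff n

def QQ (a : ℕ →₀ ℕ) : ℚ⟦X⟧ := ∑ d ∈ a.support, (a d) • Qd d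

lemma Ppoly_coe (a : ℕ →₀ ℕ) :
    ((Ppoly a : Polynomial ℚ) : ℚ⟦X⟧) =
      ∏ d ∈ a.support, ((1 : ℚ⟦X⟧) - (-X) ^ d) ^ (a d) := by
  rw [Ppoly, ← Polynomial.coeToPowerSeries.ringHom_apply, map_prod]
  refine Finset.prod_congr rfl fun d _ => ?_
  rw [map_pow, map_sub, map_one, map_pow, map_neg,
    Polynomial.coeToPowerSeries.ringHom_apply, Polynomial.coe_X]

lemma LD_P (a : ℕ →₀ ℕ) : LD ((Ppoly a : Polynomial ℚ) : ℚ⟦X⟧) (QQ a) := by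
  rw [Ppoly_coe, QQ]
  exact LD.prod _ _ _ fun d _ => (LD_base d).pow (a d)

lemma coeff_QQ_zero (a : ℕ →₀ ℕ) : (coeff 0) (QQ a) = 0 := by
  rw [QQ, map_sum]
  refine Finset.sum_eq_zero fun d _ => ?_
  rw [map_nsmul, Qd, coeff_mk]
  simp

lemma coeff_QQ (a : ℕ →₀ ℕ) (m : ℕ) (hm : m ≠ 0) :
    (coeff m) (QQ a) = (-1) ^ (m - 1) * divSum a m := by
  rw [QQ, map_sum]
  have step1 : ∀ d ∈ a.support, (coeff m) ((a d) • Qd d)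
      = if d ∣ m then (-1 : ℚ) ^ (m - 1) * ((d : ℚ) * (a d : ℚ)) else 0 := by
    intro d _
    rw [map_nsmul, Qd, coeff_mk, nsmul_eq_mul]
    by_cases h : d ∣ m
    · rw [if_pos ⟨h, hm⟩, if_pos h]; ring
    · rw [if_neg (fun hx => h hx.1), if_neg h, mul_zero]
  rw [Finset.sum_congr rfl step1]
  have hsub1 : ∑ d ∈ a.support, (if d ∣ m then (-1 : ℚ) ^ (m - 1) * ((d : ℚ) * (a d : ℚ)) else 0)
      = ∑ d ∈ a.support ∪ m.divisors,
          (if d ∣ m then (-1 : ℚ) ^ (m - 1) * ((d : ℚ) * (a d : ℚ)) else 0) := by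
    refine Finset.sum_subset Finset.subset_union_left fun d _ hd => ?_
    have ha : a d = 0 := Finsupp.notMem_support_iff.mp hd
    rw [ha]
    simp
  have hsub2 : ∑ d ∈ m.divisors, (if d ∣ m then (-1 : ℚ) ^ (m - 1) * ((d : ℚ) * (a d : ℚ)) else 0)
      = ∑ d ∈ a.support ∪ m.divisors,
          (if d ∣ m then (-1 : ℚ) ^ (m - 1) * ((d : ℚ) * (a d : ℚ)) else 0) := by
    refine Finset.sum_subset Finset.subset_union_right fun d _ hd => ?_
    have : ¬ d ∣ m := fun hdvd => hd (Nat.mem_divisors.mpr ⟨hdvd, hm⟩)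
    rw [if_neg this]
  rw [hsub1, ← hsub2]
  have : ∑ d ∈ m.divisors, (if d ∣ m then (-1 : ℚ) ^ (m - 1) * ((d : ℚ) * (a d : ℚ)) else 0)
      = ∑ d ∈ m.divisors, (-1 : ℚ) ^ (m - 1) * ((d : ℚ) * (a d : ℚ)) := by
    refine Finset.sum_congr rfl fun d hd => ?_
    rw [if_pos (Nat.mem_divisors.mp hd).1]
  rw [this, divSum, ← Finset.mul_sum]
  push_cast
  ring_nf

lemma newton_gg (a : ℕ →₀ ℕ) (n : ℕ) :
    ((n : ℚ) + 1) * gg a (n + 1) =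
      ∑ j ∈ Finset.range (n + 1), (-1 : ℚ) ^ j * (divSum a (j + 1) * gg a (n - j)) := by
  have h := congrArg (coeff (n + 1)) (LD_P a)
  rw [coeff_succ_X_mul, PowerSeries.coeff_derivative, PowerSeries.coeff_mul,
    Finset.Nat.sum_antidiagonal_eq_sum_range_succ_mk] at h
  rw [Finset.sum_range_succ'] at h
  simp only [Nat.sub_zero, coeff_QQ_zero, zero_mul, add_zero] at h
  have h2 : ∀ j ∈ Finset.range (n + 1),
      (coeff (j + 1)) (QQ a) * (coeff (n + 1 - (j + 1))) ((Ppoly a : Polynomial ℚ) : ℚ⟦X⟧)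
        = (-1 : ℚ) ^ j * (divSum a (j + 1) * gg a (n - j)) := by
    intro j _
    rw [coeff_QQ a (j + 1) (Nat.succ_ne_zero j), Polynomial.coeff_coe,
      show n + 1 - (j + 1) = n - j from by omega, show j + 1 - 1 = j from rfl]
    rw [gg]
    ring
  rw [Finset.sum_congr rfl h2] at h
  rw [← h, Polynomial.coeff_coe, gg]
  push_cast
  ring

lemma gg_zero (a : ℕ →₀ ℕ) (ha0 : a 0 = 0) : gg a 0 = 1 := by
  rw [gg, Polynomial.coeff_zero_eq_eval_zero, Ppoly, Polynomial.eval_prod]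
  refine Finset.prod_eq_one fun d hd => ?_
  have hd0 : d ≠ 0 := by
    intro h
    exact (Finsupp.mem_support_iff.mp hd) (h ▸ ha0)
  simp [zero_pow hd0]

lemma natDegree_Ppoly (a : ℕ →₀ ℕ) :
    (Ppoly a).natDegree ≤ ∑ d ∈ a.support, d * a d := by
  refine le_trans (Polynomial.natDegree_prod_le _ _) (Finset.sum_le_sum fun d _ => ?_)
  refine le_trans (Polynomial.natDegree_pow_le) ?_
  have h1 : ((1 : Polynomial ℚ) - (-Polynomial.X) ^ d).natDegree ≤ d := by
    refine le_trans (Polynomial.natDegree_sub_le _ _) ?_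
    simp [Polynomial.natDegree_pow]
  calc a d * ((1 : Polynomial ℚ) - (-Polynomial.X) ^ d).natDegree ≤ a d * d :=
        Nat.mul_le_mul_left _ h1
    _ = d * a d := Nat.mul_comm _ _

lemma gg_vanish (a : ℕ →₀ ℕ) (k m : ℕ) (hA : ∑ i ∈ a.support, i * a i ≤ k) (h : k < m) :
    gg a m = 0 := by
  rw [gg]
  refine Polynomial.coeff_eq_zero_of_natDegree_lt ?_
  exact lt_of_le_of_lt (le_trans (natDegree_Ppoly a) hA) h


end PartOne

section PartTwo

open Finset MvPolynomial
/-- the ideal `(x₁,…,x_k)` -/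
abbrev MX (k : ℕ) : Ideal (MvPolynomial (Fin k) ℚ) :=
  Ideal.span (Set.range (MvPolynomial.X : Fin k → MvPolynomial (Fin k) ℚ))

abbrev Rq (r k : ℕ) : Type := MvPolynomial (Fin k) ℚ ⧸ (MX k) ^ r

/-- the recursively defined pair of sequences `(tₙ, ηₙ)` in `ℚ[x]/(x)^r`. -/
def tE (a : ℕ →₀ ℕ) (r k : ℕ) : ℕ → Rq r k × Rq r k
  | 0 => (0, 1)
  | n + 1 =>
    (if h : n < k then
        Ideal.Quotient.mk _ (MvPolynomial.X (⟨n, h⟩ : Fin k)) +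
          algebraMap ℚ (Rq r k) (divSum a (n + 1))
      else
        ((-1 : ℚ) ^ (n + 1)) • ∑ j ∈ (Finset.range n).attach,
          ((-1 : ℚ) ^ (j : ℕ)) • ((tE a r k ((j : ℕ) + 1)).1 * (tE a r k (n - (j : ℕ))).2),
     if h : n < k then
        ((n : ℚ) + 1)⁻¹ •
          ((∑ j ∈ (Finset.range n).attach,
              ((-1 : ℚ) ^ (j : ℕ)) • ((tE a r k ((j : ℕ) + 1)).1 * (tE a r k (n - (j : ℕ))).2)) +
            ((-1 : ℚ) ^ n) • (Ideal.Quotient.mk _ (MvPolynomial.X (⟨n, h⟩ : Fin k)) +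
              algebraMap ℚ (Rq r k) (divSum a (n + 1))))
      else 0)
  termination_by n => n
  decreasing_by
  · exact Nat.add_lt_add_right (Finset.mem_range.mp j.2) 1
  · exact Nat.lt_succ_of_le (Nat.sub_le _ _)
  · exact Nat.add_lt_add_right (Finset.mem_range.mp j.2) 1
  · exact Nat.lt_succ_of_le (Nat.sub_le _ _)

def tS (a : ℕ →₀ ℕ) (r k n : ℕ) : Rq r k := (tE a r k n).1
def eS (a : ℕ →₀ ℕ) (r k n : ℕ) : Rq r k := (tE a r k n).2

def sSum (a : ℕ →₀ ℕ) (r k n : ℕ) : Rq r k :=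
  ∑ j ∈ Finset.range n, ((-1 : ℚ) ^ j) • (tS a r k (j + 1) * eS a r k (n - j))

lemma tS_zero (a : ℕ →₀ ℕ) (r k : ℕ) : tS a r k 0 = 0 := by rw [tS, tE]
lemma eS_zero (a : ℕ →₀ ℕ) (r k : ℕ) : eS a r k 0 = 1 := by rw [eS, tE]

lemma attach_sum_eq (a : ℕ →₀ ℕ) (r k n : ℕ) :
    (∑ j ∈ (Finset.range n).attach,
        ((-1 : ℚ) ^ (j : ℕ)) • ((tE a r k ((j : ℕ) + 1)).1 * (tE a r k (n - (j : ℕ))).2))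
      = sSum a r k n := by
  rw [sSum]
  exact Finset.sum_attach (Finset.range n)
    (fun j => ((-1 : ℚ) ^ j) • (tS a r k (j + 1) * eS a r k (n - j)))

lemma tS_succ_lt (a : ℕ →₀ ℕ) (r k n : ℕ) (h : n < k) :
    tS a r k (n + 1) = Ideal.Quotient.mk _ (MvPolynomial.X (⟨n, h⟩ : Fin k)) +
      algebraMap ℚ (Rq r k) (divSum a (n + 1)) := by
  rw [tS, tE]
  simp only [dif_pos h]

lemma tS_succ_ge (a : ℕ →₀ ℕ) (r k n : ℕ) (h : ¬ n < k) :
    tS a r k (n + 1) = ((-1 : ℚ) ^ (n + 1)) • sSum a r k n := by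
  rw [tS, tE]
  simp only [dif_neg h]
  rw [attach_sum_eq]

lemma eS_succ_lt (a : ℕ →₀ ℕ) (r k n : ℕ) (h : n < k) :
    eS a r k (n + 1) =
      ((n : ℚ) + 1)⁻¹ • (sSum a r k n + ((-1 : ℚ) ^ n) • tS a r k (n + 1)) := by
  rw [eS, tE]
  simp only [dif_pos h]
  rw [attach_sum_eq, tS_succ_lt a r k n h]

lemma eS_succ_ge (a : ℕ →₀ ℕ) (r k n : ℕ) (h : ¬ n < k) :
    eS a r k (n + 1) = 0 := by
  rw [eS, tE]
  simp only [dif_neg h]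

lemma newton_tE (a : ℕ →₀ ℕ) (r k n : ℕ) :
    ∑ j ∈ Finset.range (n + 1), ((-1 : ℚ) ^ j) • (tS a r k (j + 1) * eS a r k (n - j))
      = ((n : ℚ) + 1) • eS a r k (n + 1) := by
  rw [Finset.sum_range_succ, Nat.sub_self, eS_zero, mul_one]
  have hsplit : ∀ j ∈ Finset.range n, ((-1 : ℚ) ^ j) • (tS a r k (j + 1) * eS a r k (n - j))
      = ((-1 : ℚ) ^ j) • (tS a r k (j + 1) * eS a r k (n - j)) := fun _ _ => rfl
  by_cases h : n < k
  · rw [eS_succ_lt a r k n h, smul_smul, mul_inv_cancel₀ (by positivity : (n : ℚ) + 1 ≠ 0),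
      one_smul, sSum]
  · rw [eS_succ_ge a r k n h, smul_zero, tS_succ_ge a r k n h, smul_smul]
    have : (-1 : ℚ) ^ n * (-1 : ℚ) ^ (n + 1) = -1 := by
      rw [← pow_add]
      exact Odd.neg_one_pow ⟨n, by ring⟩
    rw [this, sSum, neg_one_smul]
    exact add_neg_cancel _



/-- the image of `(x₁,…,x_k)` in `ℚ[x]/(x)^r` -/
def NX (r k : ℕ) : Ideal (Rq r k) :=
  Ideal.map (Ideal.Quotient.mk ((MX k) ^ r)) (MX k)

/-- quotient map `Rq → Rq/NX` -/
def rho (r k : ℕ) : Rq r k →ₐ[ℚ] (Rq r k ⧸ NX r k) :=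
  Ideal.Quotient.mkₐ ℚ (NX r k)

lemma divSum_zero (a : ℕ →₀ ℕ) : divSum a 0 = 0 := by
  simp [divSum]

/-- mod `NX`, `tₙ` is `divSum n` and `ηₙ` is `gg n`. -/
lemma rho_tS_eS (a : ℕ →₀ ℕ) (ha0 : a 0 = 0) (r k : ℕ)
    (hA : ∑ i ∈ a.support, i * a i ≤ k) :
    ∀ n : ℕ, rho r k (tS a r k n) = @algebraMap ℚ (Rq r k ⧸ NX r k) _ (Ideal.Quotient.semiring _) _ (divSum a n) ∧
      rho r k (eS a r k n) = @algebraMap ℚ (Rq r k ⧸ NX r k) _ (Ideal.Quotient.semiring _) _ (gg a n) := by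
  intro n
  induction n using Nat.strong_induction_on with
  | _ n ih =>
    match n with
    | 0 =>
        constructor
        · rw [tS_zero, divSum_zero, map_zero, map_zero]
        · rw [eS_zero, gg_zero a ha0, map_one, map_one]
    | n + 1 =>
        -- the image of the partial sum
        have hsm : ∀ (q y : ℚ), q • (@algebraMap ℚ (Rq r k ⧸ NX r k) _ (Ideal.Quotient.semiring _) _ y)
            = @algebraMap ℚ (Rq r k ⧸ NX r k) _ (Ideal.Quotient.semiring _) _ (q * y) := by
          intro q y
          rw [map_mul]
          exact @Algebra.smul_def ℚ (Rq r k ⧸ NX r k) _ (Ideal.Quotient.semiring _) _ q _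
        have hs : rho r k (sSum a r k n) =
            @algebraMap ℚ (Rq r k ⧸ NX r k) _ (Ideal.Quotient.semiring _) _ (∑ j ∈ Finset.range n,
              (-1 : ℚ) ^ j * (divSum a (j + 1) * gg a (n - j))) := by
          rw [sSum, map_sum, map_sum]
          refine Finset.sum_congr rfl fun j hj => ?_
          have hj' : j < n := Finset.mem_range.mp hj
          rw [map_smul, map_mul, (ih (j + 1) (by omega)).1, (ih (n - j) (by omega)).2,
            ← map_mul, hsm]
        have ht : rho r k (tS a r k (n + 1)) = @algebraMap ℚ (Rq r k ⧸ NX r k) _ (Ideal.Quotient.semiring _) _ (divSum a (n + 1)) := by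
          by_cases h : n < k
          · rw [tS_succ_lt a r k n h, map_add, AlgHom.commutes]
            have hX : (MvPolynomial.X (⟨n, h⟩ : Fin k) : MvPolynomial (Fin k) ℚ) ∈ MX k :=
              Ideal.subset_span ⟨⟨n, h⟩, rfl⟩
            have : rho r k (Ideal.Quotient.mk ((MX k) ^ r) (MvPolynomial.X (⟨n, h⟩ : Fin k)))
                = 0 := by
              rw [rho, Ideal.Quotient.mkₐ_eq_mk, Ideal.Quotient.eq_zero_iff_mem]
              exact Ideal.mem_map_of_mem _ hX
            rw [this, zero_add]
          · -- n ≥ k : use Newton for gg and vanishing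
            have hgg : gg a (n + 1) = 0 := gg_vanish a k (n + 1) hA (by omega)
            have hN := newton_gg a n
            rw [hgg, mul_zero, Finset.sum_range_succ, Nat.sub_self, gg_zero a ha0,
              mul_one] at hN
            -- 0 = Σ_{j<n} … + (-1)^n * divSum (n+1)
            have hc : divSum a (n + 1) = (-1 : ℚ) ^ (n + 1) *
                ∑ j ∈ Finset.range n, (-1 : ℚ) ^ j * (divSum a (j + 1) * gg a (n - j)) := by
              have h1 : (-1 : ℚ) ^ n * divSum a (n + 1)
                  = - ∑ j ∈ Finset.range n, (-1 : ℚ) ^ j * (divSum a (j + 1) * gg a (n - j)) := by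
                linarith [hN]
              have h2 := congrArg (fun z => (-1 : ℚ) ^ n * z) h1
              rw [show (-1 : ℚ) ^ n * ((-1 : ℚ) ^ n * divSum a (n + 1))
                  = ((-1 : ℚ) ^ n * (-1 : ℚ) ^ n) * divSum a (n + 1) from by ring,
                ← pow_add, Even.neg_one_pow ⟨n, by ring⟩, one_mul] at h2
              rw [h2, pow_succ]
              ring
            rw [tS_succ_ge a r k n h, map_smul, hs, hsm, hc]
        refine ⟨ht, ?_⟩
        -- e-part, uniform: apply rho to newton_tE
        have hNt := congrArg (rho r k) (newton_tE a r k n)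
        rw [map_smul, map_sum] at hNt
        have hsum : ∀ j ∈ Finset.range (n + 1),
            rho r k (((-1 : ℚ) ^ j) • (tS a r k (j + 1) * eS a r k (n - j)))
              = @algebraMap ℚ (Rq r k ⧸ NX r k) _ (Ideal.Quotient.semiring _) _ ((-1 : ℚ) ^ j * (divSum a (j + 1) * gg a (n - j))) := by
          intro j hj
          have hj' : j < n + 1 := Finset.mem_range.mp hj
          have htj : rho r k (tS a r k (j + 1)) = @algebraMap ℚ (Rq r k ⧸ NX r k) _ (Ideal.Quotient.semiring _) _ (divSum a (j + 1)) := by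
            rcases Nat.lt_or_ge (j + 1) (n + 1) with hlt | hge
            · exact (ih (j + 1) hlt).1
            · have : j = n := by omega
              rw [this]; exact ht
          rw [map_smul, map_mul, htj, (ih (n - j) (by omega)).2, ← map_mul, hsm]
        rw [Finset.sum_congr rfl hsum, ← map_sum, ← newton_gg a n] at hNt
        -- hNt : algebraMap (…*gg (n+1)) = (n+1) • rho (eS (n+1))
        rw [show @algebraMap ℚ (Rq r k ⧸ NX r k) _ (Ideal.Quotient.semiring _) _ (((n : ℚ) + 1) * gg a (n + 1))
            = ((n : ℚ) + 1) • @algebraMap ℚ (Rq r k ⧸ NX r k) _ (Ideal.Quotient.semiring _) _ (gg a (n + 1)) from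
          (hsm _ _).symm] at hNt
        have hne : ((n : ℚ) + 1) ≠ 0 := by positivity
        have h2 := congrArg (fun z => ((n : ℚ) + 1)⁻¹ • z) hNt
        simp only [smul_smul, inv_mul_cancel₀ hne, one_smul] at h2
        exact h2.symm



/-- the homomorphism `Λ → ℚ[x]/(x)^r`, `pₙ ↦ tₙ`. -/
def Theta (a : ℕ →₀ ℕ) (r k : ℕ) : SymmFn →ₐ[ℚ] Rq r k :=
  MvPolynomial.aeval fun i : ℕ+ => tS a r k i

lemma Theta_p (a : ℕ →₀ ℕ) (r k n : ℕ) (hn : 0 < n) :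
    Theta a r k (pSym n) = tS a r k n := by
  rw [pSym, dif_pos hn, Theta]
  exact aeval_X _ _

lemma Theta_e (a : ℕ →₀ ℕ) (r k : ℕ) : ∀ n, Theta a r k (eSym n) = eS a r k n := by
  intro n
  induction n using Nat.strong_induction_on with
  | _ n ih =>
    match n with
    | 0 => rw [show eSym 0 = 1 from by rw [eSym], eS_zero, map_one]
    | n + 1 =>
        rw [eSym, map_smul, map_sum]
        have h1 : ∀ j ∈ Finset.range (n + 1),
            Theta a r k (((-1 : ℚ) ^ j) • (pSym (j + 1) * eSym (n - j)))
              = ((-1 : ℚ) ^ j) • (tS a r k (j + 1) * eS a r k (n - j)) := by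
          intro j hj
          have hj' : j < n + 1 := Finset.mem_range.mp hj
          rw [map_smul, map_mul, Theta_p a r k (j + 1) (Nat.succ_pos j), ih (n - j) (by omega)]
        rw [Finset.sum_congr rfl h1, newton_tE, smul_smul,
          inv_mul_cancel₀ (by positivity : (n : ℚ) + 1 ≠ 0), one_smul]

lemma Theta_u (a : ℕ →₀ ℕ) (r k n : ℕ) (hn : 0 < n) :
    Theta a r k (uSym a n) = tS a r k n - algebraMap ℚ _ (divSum a n) := by
  rw [uSym, map_sub, Theta_p a r k n hn, show (MvPolynomial.C (divSum a n) : SymmFn)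
    = algebraMap ℚ SymmFn (divSum a n) from rfl, AlgHom.commutes]

lemma Theta_u_mem (a : ℕ →₀ ℕ) (ha0 : a 0 = 0) (r k : ℕ)
    (hA : ∑ i ∈ a.support, i * a i ≤ k) (n : ℕ) (hn : 0 < n) :
    Theta a r k (uSym a n) ∈ NX r k := by
  rw [Theta_u a r k n hn, ← Ideal.Quotient.eq_zero_iff_mem (I := NX r k)]
  have h := (rho_tS_eS a ha0 r k hA n).1
  rw [show (Ideal.Quotient.mk (NX r k)) (tS a r k n - algebraMap ℚ (Rq r k) (divSum a n))
      = rho r k (tS a r k n) - rho r k (algebraMap ℚ (Rq r k) (divSum a n)) from map_sub _ _ _,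
    h, AlgHom.commutes, sub_self]

/-- `Θ` annihilates `U^r + E_{>k}`. -/
lemma Theta_ann (a : ℕ →₀ ℕ) (ha0 : a 0 = 0) (r k : ℕ)
    (hA : ∑ i ∈ a.support, i * a i ≤ k) :
    ∀ x ∈ (Uideal a) ^ r + Egt k, Theta a r k x = 0 := by
  have hU : Uideal a ^ r ≤ RingHom.ker (Theta a r k) := by
    rw [← Ideal.map_eq_bot_iff_le_ker, Ideal.map_pow]
    have h1 : Ideal.map (Theta a r k) (Uideal a) ≤ NX r k := by
      rw [Uideal, Ideal.map_span, Ideal.span_le]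
      rintro x ⟨y, ⟨n, hn, rfl⟩, rfl⟩
      exact Theta_u_mem a ha0 r k hA n hn
    have h2 : (NX r k) ^ r = ⊥ := by
      rw [NX, ← Ideal.map_pow, Ideal.map_eq_bot_iff_le_ker, Ideal.mk_ker]
    rw [← le_bot_iff, ← h2]
    exact Ideal.pow_right_mono h1 r
  have hE : Egt k ≤ RingHom.ker (Theta a r k) := by
    rw [Egt, Ideal.span_le]
    rintro x ⟨m, hm, rfl⟩
    have : Theta a r k (eSym m) = eS a r k m := Theta_e a r k m
    rw [SetLike.mem_coe, RingHom.mem_ker, this]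
    obtain ⟨n, rfl⟩ : ∃ n, m = n + 1 := ⟨m - 1, by omega⟩
    exact eS_succ_ge a r k n (by omega)
  intro x hx
  have : (Uideal a) ^ r + Egt k ≤ RingHom.ker (Theta a r k) := sup_le hU hE
  exact this hx

/-- lift of `Θ` to the quotient. -/
def Psi (a : ℕ →₀ ℕ) (ha0 : a 0 = 0) (r k : ℕ)
    (hA : ∑ i ∈ a.support, i * a i ≤ k) :
    (SymmFn ⧸ ((Uideal a) ^ r + Egt k)) →ₐ[ℚ] Rq r k :=
  Ideal.Quotient.liftₐ _ (Theta a r k) (Theta_ann a ha0 r k hA)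

lemma Psi_comp (a : ℕ →₀ ℕ) (ha0 : a 0 = 0) (r k : ℕ)
    (hA : ∑ i ∈ a.support, i * a i ≤ k) (f : MvPolynomial (Fin k) ℚ) :
    Psi a ha0 r k hA (uQuotHom a r k f) = Ideal.Quotient.mk ((MX k) ^ r) f := by
  have : (Psi a ha0 r k hA).comp (uQuotHom a r k) = Ideal.Quotient.mkₐ ℚ ((MX k) ^ r) := by
    apply MvPolynomial.algHom_ext
    intro i
    rw [AlgHom.comp_apply, uQuotHom, aeval_X]
    have h1 : Psi a ha0 r k hA (Ideal.Quotient.mk ((Uideal a) ^ r + Egt k) (uSym a (↑i + 1)))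
        = Theta a r k (uSym a (↑i + 1)) := by
      rw [Psi, Ideal.Quotient.liftₐ_apply]
      rfl
    rw [h1, Theta_u a r k (↑i + 1) (Nat.succ_pos _), tS_succ_lt a r k (↑i) i.isLt,
      add_sub_cancel_right, Ideal.Quotient.mkₐ_eq_mk]
  have h2 := DFunLike.congr_fun this f
  simpa [Ideal.Quotient.mkₐ_eq_mk] using h2

theorem main_ker (a : ℕ →₀ ℕ) (ha0 : a 0 = 0) (r k : ℕ)
    (hA : ∑ i ∈ a.support, i * a i ≤ k) :
    RingHom.ker (uQuotHom a r k) = (MX k) ^ r := by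
  apply le_antisymm
  · intro f hf
    rw [RingHom.mem_ker] at hf
    have := Psi_comp a ha0 r k hA f
    rw [hf, map_zero] at this
    exact (Ideal.Quotient.eq_zero_iff_mem).mp this.symm
  · intro f hf
    rw [RingHom.mem_ker]
    have h1 : Ideal.map (uQuotHom a r k) (MX k) ≤
        Ideal.map (Ideal.Quotient.mk ((Uideal a) ^ r + Egt k)) (Uideal a) := by
      rw [Ideal.map_span, Ideal.span_le]
      rintro x ⟨y, ⟨i, rfl⟩, rfl⟩
      have hval : (uQuotHom a r k) (MvPolynomial.X i) =
          Ideal.Quotient.mk ((Uideal a) ^ r + Egt k) (uSym a ((i : ℕ) + 1)) := by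
        rw [uQuotHom, aeval_X]
      have hu : uSym a ((i : ℕ) + 1) ∈ Uideal a :=
        Ideal.subset_span ⟨(i : ℕ) + 1, Nat.succ_pos _, rfl⟩
      rw [SetLike.mem_coe, hval]
      exact Ideal.mem_map_of_mem (Ideal.Quotient.mk ((Uideal a) ^ r + Egt k)) hu
    have h2 : Ideal.map (uQuotHom a r k) ((MX k) ^ r) = ⊥ := by
      rw [Ideal.map_pow, ← le_bot_iff]
      have h3 : (Ideal.map (Ideal.Quotient.mk ((Uideal a) ^ r + Egt k)) (Uideal a)) ^ r = ⊥ := by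
        rw [← Ideal.map_pow, Ideal.map_eq_bot_iff_le_ker, Ideal.mk_ker]
        exact le_sup_left
      rw [← h3]
      exact Ideal.pow_right_mono h1 r
    have h4 : uQuotHom a r k f ∈ Ideal.map (uQuotHom a r k) ((MX k) ^ r) :=
      Ideal.mem_map_of_mem _ hf
    rw [h2] at h4
    exact h4



lemma mk_p_e_mem (a : ℕ →₀ ℕ) (r k : ℕ) :
    ∀ n : ℕ, Ideal.Quotient.mk ((Uideal a) ^ r + Egt k) (pSym n) ∈ (uQuotHom a r k).range ∧
      Ideal.Quotient.mk ((Uideal a) ^ r + Egt k) (eSym n) ∈ (uQuotHom a r k).range := by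
  set B := (Uideal a) ^ r + Egt k with hB
  set S := (uQuotHom a r k).range with hS
  have hmk_smul : ∀ (q : ℚ) (x : SymmFn), Ideal.Quotient.mk B (q • x)
      = q • Ideal.Quotient.mk B x := fun q x =>
    map_smul (Ideal.Quotient.mkₐ ℚ B) q x
  intro n
  induction n using Nat.strong_induction_on with
  | _ n ih =>
    match n with
    | 0 =>
        constructor
        · rw [pSym, dif_neg (lt_irrefl 0), map_zero]
          exact zero_mem S
        · rw [show eSym 0 = 1 from by rw [eSym], map_one]
          exact one_mem S
    | n + 1 =>
        have hesum : Ideal.Quotient.mk B (eSym (n + 1)) = ((n : ℚ) + 1)⁻¹ •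
            ∑ j ∈ Finset.range (n + 1),
              ((-1 : ℚ) ^ j) • (Ideal.Quotient.mk B (pSym (j + 1)) *
                Ideal.Quotient.mk B (eSym (n - j))) := by
          rw [eSym, hmk_smul, map_sum]
          simp only [hmk_smul, map_mul]
        have hp : Ideal.Quotient.mk B (pSym (n + 1)) ∈ S := by
          by_cases h : n < k
          · have hup : pSym (n + 1) = uSym a (n + 1) + MvPolynomial.C (divSum a (n + 1)) := by
              rw [uSym, sub_add_cancel]
            have hu : Ideal.Quotient.mk B (uSym a (n + 1)) ∈ S := by
              refine ⟨MvPolynomial.X (⟨n, h⟩ : Fin k), ?_⟩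
              show uQuotHom a r k (MvPolynomial.X (⟨n, h⟩ : Fin k))
                  = Ideal.Quotient.mk B (uSym a (n + 1))
              rw [uQuotHom, aeval_X]
            have hc : Ideal.Quotient.mk B (MvPolynomial.C (divSum a (n + 1))) ∈ S := by
              have : (MvPolynomial.C (divSum a (n + 1)) : SymmFn)
                  = algebraMap ℚ SymmFn (divSum a (n + 1)) := rfl
              rw [this, show Ideal.Quotient.mk B (algebraMap ℚ SymmFn (divSum a (n + 1)))
                  = algebraMap ℚ _ (divSum a (n + 1)) from
                (Ideal.Quotient.mkₐ ℚ B).commutes _]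
              exact Subalgebra.algebraMap_mem S _
            rw [hup, map_add]
            exact add_mem hu hc
          · -- n ≥ k : use that e_{n+1} dies in the quotient
            have he0 : Ideal.Quotient.mk B (eSym (n + 1)) = 0 := by
              rw [Ideal.Quotient.eq_zero_iff_mem]
              have : eSym (n + 1) ∈ Egt k := Ideal.subset_span ⟨n + 1, by omega, rfl⟩
              exact Submodule.mem_sup_right this
            have hsum0 : ∑ j ∈ Finset.range (n + 1),
                ((-1 : ℚ) ^ j) • (Ideal.Quotient.mk B (pSym (j + 1)) *
                  Ideal.Quotient.mk B (eSym (n - j))) = 0 := by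
              have h2 := congrArg (fun z => ((n : ℚ) + 1) • z) (hesum.symm.trans he0)
              simp only [smul_zero, smul_smul,
                mul_inv_cancel₀ (by positivity : (n : ℚ) + 1 ≠ 0), one_smul] at h2
              exact h2
            rw [Finset.sum_range_succ, Nat.sub_self,
              show eSym 0 = 1 from by rw [eSym], map_one, mul_one] at hsum0
            have hPA : ((-1 : ℚ) ^ n) • Ideal.Quotient.mk B (pSym (n + 1))
                = - ∑ j ∈ Finset.range n, ((-1 : ℚ) ^ j) •
                  (Ideal.Quotient.mk B (pSym (j + 1)) * Ideal.Quotient.mk B (eSym (n - j))) :=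
              eq_neg_of_add_eq_zero_right hsum0
            have hP : Ideal.Quotient.mk B (pSym (n + 1)) = ((-1 : ℚ) ^ n) •
                (- ∑ j ∈ Finset.range n, ((-1 : ℚ) ^ j) •
                  (Ideal.Quotient.mk B (pSym (j + 1)) * Ideal.Quotient.mk B (eSym (n - j)))) := by
              rw [← hPA, smul_smul, ← pow_add, Even.neg_one_pow ⟨n, by ring⟩, one_smul]
            rw [hP]
            refine Subalgebra.smul_mem S (neg_mem (sum_mem fun j hj => ?_)) _
            have hj' : j < n := Finset.mem_range.mp hj
            exact Subalgebra.smul_mem S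
              (mul_mem (ih (j + 1) (by omega)).1 (ih (n - j) (by omega)).2) _
        refine ⟨hp, ?_⟩
        rw [hesum]
        refine Subalgebra.smul_mem S (sum_mem fun j hj => ?_) _
        have hj' : j < n + 1 := Finset.mem_range.mp hj
        have hpj : Ideal.Quotient.mk B (pSym (j + 1)) ∈ S := by
          rcases Nat.lt_or_ge (j + 1) (n + 1) with hlt | hge
          · exact (ih (j + 1) hlt).1
          · have hjn : j = n := by omega
            rw [hjn]; exact hp
        exact Subalgebra.smul_mem S (mul_mem hpj (ih (n - j) (by omega)).2) _

lemma main_surj (a : ℕ →₀ ℕ) (r k : ℕ) :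
    Function.Surjective (uQuotHom a r k) := by
  intro y
  obtain ⟨f, rfl⟩ := Ideal.Quotient.mk_surjective y
  suffices h : Ideal.Quotient.mk ((Uideal a) ^ r + Egt k) f ∈ (uQuotHom a r k).range by
    obtain ⟨g, hg⟩ := h
    exact ⟨g, hg⟩
  have hT : Set.range (MvPolynomial.X : ℕ+ → SymmFn) ⊆
      ((uQuotHom a r k).range.comap (Ideal.Quotient.mkₐ ℚ ((Uideal a) ^ r + Egt k)) :
        Subalgebra ℚ SymmFn) := by
    rintro x ⟨i, rfl⟩
    have hpx : pSym (i : ℕ) = MvPolynomial.X i := by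
      rw [pSym]
      exact dif_pos i.2
    rw [SetLike.mem_coe, Subalgebra.mem_comap, Ideal.Quotient.mkₐ_eq_mk, ← hpx]
    exact (mk_p_e_mem a r k (i : ℕ)).1
  have htop : (⊤ : Subalgebra ℚ SymmFn) ≤
      (uQuotHom a r k).range.comap (Ideal.Quotient.mkₐ ℚ ((Uideal a) ^ r + Egt k)) := by
    rw [← MvPolynomial.adjoin_range_X]
    exact Algebra.adjoin_le hT
  have hf := htop (Algebra.mem_top (x := f))
  rw [Subalgebra.mem_comap, Ideal.Quotient.mkₐ_eq_mk] at hf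
  exact hf


end PartTwo

end Stmt9

/-- For `r, k ≥ 1` with `|A| ≤ k`, the homomorphism
`ℚ[x₁, …, x_k] → Λ/(U^r + E_{>k})`, `x_i ↦ [u_i]`, is surjective with kernel
`(x₁, …, x_k)^r`; in particular it induces an isomorphism
`ℚ[x₁, …, x_k]/(x₁, …, x_k)^r ≅ Λ/(U^r + E_{>k})`. -/
theorem uQuotHom_surjective_ker (a : ℕ →₀ ℕ) (ha0 : a 0 = 0) (r k : ℕ)
    (hr : 1 ≤ r) (hk : 1 ≤ k) (hA : ∑ i ∈ a.support, i * a i ≤ k) :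
    Function.Surjective (uQuotHom a r k) ∧
      RingHom.ker (uQuotHom a r k) =
        (Ideal.span (Set.range (MvPolynomial.X : Fin k → MvPolynomial (Fin k) ℚ))) ^ r := by
  exact ⟨Stmt9.main_surj a r k, Stmt9.main_ker a ha0 r k hA⟩

end
end

section
/- For every m ≥ 1 the following identity holds in Λ: E_m = − ∑_{n=1}^{m} (−1)^n c_{m−n} ∑_{λ ⊢ n} sgn(λ) · u_λ / z_λ, where the inner sum is over all integer partitions λ of n, and for λ = 1^{m₁}2^{m₂}⋯ one sets u_λ := ∏_i u_i^{m_i}, z_λ := ∏_i i^{m_i} · m_i!, and sgn(λ) := ∏_{i even} (−1)^{m_i}. In particular, E_m lies in the ideal of Λ generated by { uₙ : n ≥ 1 }. -/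
noncomputable section

/-- The polynomial `∏_{i ≥ 1} (1 − tⁱ)^{a_i}` (a finite product). -/
def cPoly (a : ℕ →₀ ℕ) : Polynomial ℚ :=
  ∏ i ∈ a.support, (1 - Polynomial.X ^ i) ^ a i

/-- `c_m`, the coefficient of `t^m` in `∏_{i ≥ 1} (1 − tⁱ)^{a_i}` (`0` for `m < 0`,
which here cannot occur). -/
def cCoeff (a : ℕ →₀ ℕ) (m : ℕ) : ℚ :=
  (cPoly a).coeff m

/-- `E_m := −(−1)^m e_m + c_m`. -/
def ESym (a : ℕ →₀ ℕ) (m : ℕ) : SymmFn :=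
  (-(-1 : ℚ) ^ m) • eSym m + MvPolynomial.C (cCoeff a m)

/-- `u_λ := ∏_i u_i^{m_i}` for an integer partition `λ = 1^{m₁}2^{m₂}⋯`. -/
def uPart (a : ℕ →₀ ℕ) {n : ℕ} (π : n.Partition) : SymmFn :=
  (π.parts.map (uSym a)).prod

/-- `z_λ := ∏_i i^{m_i}·m_i!`. -/
def zPart {n : ℕ} (π : n.Partition) : ℚ :=
  ∏ i ∈ π.parts.toFinset, ((i : ℚ) ^ (π.parts.count i) * (Nat.factorial (π.parts.count i) : ℚ))

/-- `sgn(λ) := ∏_{i even} (−1)^{m_i}`. -/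
def sgnPart {n : ℕ} (π : n.Partition) : ℚ :=
  ∏ i ∈ π.parts.toFinset, if Even i then (-1 : ℚ) ^ (π.parts.count i) else 1


/-- sequences satisfying a "logarithmic derivative" recursion -/
def LD {R : Type*} [CommRing R] [Algebra ℚ R] (f v : ℕ → R) : Prop :=
  f 0 = 1 ∧ ∀ m : ℕ, 1 ≤ m → (m : ℚ) • f m = -∑ k ∈ Finset.Icc 1 m, v k * f (m - k)

lemma LD_congr {R : Type*} [CommRing R] [Algebra ℚ R] {f v w : ℕ → R}
    (h : LD f v) (hvw : ∀ k, 1 ≤ k → v k = w k) : LD f w := by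
  refine ⟨h.1, fun m hm => ?_⟩
  rw [h.2 m hm]
  congr 1
  refine Finset.sum_congr rfl fun k hk => ?_
  rw [hvw k (Finset.mem_Icc.mp hk).1]

lemma LD_unique {R : Type*} [CommRing R] [Algebra ℚ R] {f g v : ℕ → R}
    (hf : LD f v) (hg : LD g v) : ∀ m, f m = g m := by
  intro m
  induction m using Nat.strong_induction_on with
  | _ m ih =>
    rcases Nat.eq_zero_or_pos m with h0 | h1
    · rw [h0, hf.1, hg.1]
    · have h2 : (m : ℚ) • f m = (m : ℚ) • g m := by
        rw [hf.2 m h1, hg.2 m h1]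
        congr 1
        refine Finset.sum_congr rfl fun k hk => ?_
        have hk' := Finset.mem_Icc.mp hk
        rw [ih (m - k) (by omega)]
      have hm0 : (m : ℚ) ≠ 0 := Nat.cast_ne_zero.mpr (by omega)
      calc f m = (m : ℚ)⁻¹ • ((m : ℚ) • f m) := by rw [smul_smul, inv_mul_cancel₀ hm0, one_smul]
        _ = (m : ℚ)⁻¹ • ((m : ℚ) • g m) := by rw [h2]
        _ = g m := by rw [smul_smul, inv_mul_cancel₀ hm0, one_smul]

lemma Icc_sum_eq_range {M : Type*} [AddCommMonoid M] (f : ℕ → M) (m : ℕ) :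
    ∑ k ∈ Finset.Icc 1 m, f k = ∑ j ∈ Finset.range m, f (1 + j) := by
  rw [← Finset.Ico_add_one_right_eq_Icc, Finset.sum_Ico_eq_sum_range]
  simp

lemma LD_mul {R : Type*} [CommRing R] [Algebra ℚ R] {f g v w : ℕ → R}
    (hf : LD f v) (hg : LD g w) :
    LD (fun m => ∑ j ∈ Finset.range (m + 1), f j * g (m - j)) (fun k => v k + w k) := by
  constructor
  · simp [hf.1, hg.1]
  intro m hm
  have key : ∀ j ∈ Finset.range (m + 1), (m : ℚ) • (f j * g (m - j))
      = ((j : ℚ) • f j) * g (m - j) + f j * (((m - j : ℕ) : ℚ) • g (m - j)) := by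
    intro j hj
    have hj' : j ≤ m := by have := Finset.mem_range.mp hj; omega
    have hcast : ((j + (m - j) : ℕ) : ℚ) = (j : ℚ) + ((m - j : ℕ) : ℚ) := Nat.cast_add _ _
    rw [Nat.add_sub_cancel' hj'] at hcast
    rw [hcast, add_smul, smul_mul_assoc, mul_smul_comm]
  rw [Finset.smul_sum, Finset.sum_congr rfl key, Finset.sum_add_distrib]
  have hA : ∑ j ∈ Finset.range (m + 1), ((j : ℚ) • f j) * g (m - j)
      = -∑ k ∈ Finset.Icc 1 m, v k * ∑ j ∈ Finset.range (m - k + 1), f j * g ((m - k) - j) := by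
    have h1 : ∑ j ∈ Finset.range (m + 1), ((j : ℚ) • f j) * g (m - j)
        = ∑ j ∈ Finset.Icc 1 m, ((j : ℚ) • f j) * g (m - j) := by
      symm; apply Finset.sum_subset
      · intro x hx; simp only [Finset.mem_Icc] at hx; simp only [Finset.mem_range]; omega
      · intro x hx1 hx2
        have hx0 : x = 0 := by
          simp only [Finset.mem_range] at hx1; simp only [Finset.mem_Icc] at hx2; omega
        simp [hx0]
    have h2 : ∀ j ∈ Finset.Icc 1 m, ((j : ℚ) • f j) * g (m - j)
        = ∑ k ∈ Finset.Icc 1 j, -(v k * (f (j - k) * g (m - j))) := by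
      intro j hj
      rw [hf.2 j (Finset.mem_Icc.mp hj).1, neg_mul, Finset.sum_mul, ← Finset.sum_neg_distrib]
      exact Finset.sum_congr rfl fun k _ => by rw [mul_assoc]
    rw [h1, Finset.sum_congr rfl h2,
      Finset.sum_comm' (s' := fun k => Finset.Icc k m) (t' := Finset.Icc 1 m)
        (by intro j k; simp only [Finset.mem_Icc]; omega),
      ← Finset.sum_neg_distrib]
    refine Finset.sum_congr rfl fun k hk => ?_
    have hk' := Finset.mem_Icc.mp hk
    rw [Finset.sum_neg_distrib]
    congr 1
    rw [Finset.mul_sum, ← Finset.Ico_add_one_right_eq_Icc, Finset.sum_Ico_eq_sum_range]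
    have hrange : m + 1 - k = m - k + 1 := by omega
    rw [hrange]
    refine Finset.sum_congr rfl fun l hl => ?_
    have h3 : k + l - k = l := by omega
    have h4 : m - (k + l) = m - k - l := by omega
    rw [h3, h4]
  have hB : ∑ j ∈ Finset.range (m + 1), f j * (((m - j : ℕ) : ℚ) • g (m - j))
      = -∑ k ∈ Finset.Icc 1 m, w k * ∑ j ∈ Finset.range (m - k + 1), f j * g ((m - k) - j) := by
    have h1 : ∑ j ∈ Finset.range (m + 1), f j * (((m - j : ℕ) : ℚ) • g (m - j))
        = ∑ j ∈ Finset.range m, f j * (((m - j : ℕ) : ℚ) • g (m - j)) := by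
      symm; apply Finset.sum_subset
      · intro x hx; simp only [Finset.mem_range] at hx ⊢; omega
      · intro x hx1 hx2
        have hx0 : x = m := by
          simp only [Finset.mem_range] at hx1 hx2; omega
        simp [hx0]
    have h2 : ∀ j ∈ Finset.range m, f j * (((m - j : ℕ) : ℚ) • g (m - j))
        = ∑ k ∈ Finset.Icc 1 (m - j), -(w k * (f j * g (m - j - k))) := by
      intro j hj
      have hj' : 1 ≤ m - j := by have := Finset.mem_range.mp hj; omega
      rw [hg.2 (m - j) hj', mul_neg, Finset.mul_sum, ← Finset.sum_neg_distrib]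
      refine Finset.sum_congr rfl fun k _ => by ring
    rw [h1, Finset.sum_congr rfl h2,
      Finset.sum_comm' (s' := fun k => Finset.range (m - k + 1)) (t' := Finset.Icc 1 m)
        (by intro j k; simp only [Finset.mem_range, Finset.mem_Icc]; omega),
      ← Finset.sum_neg_distrib]
    refine Finset.sum_congr rfl fun k hk => ?_
    rw [Finset.sum_neg_distrib]
    congr 1
    rw [Finset.mul_sum]
    refine Finset.sum_congr rfl fun j hj => ?_
    have h4 : m - j - k = m - k - j := by omega
    rw [h4]
  rw [hA, hB, ← neg_add, ← Finset.sum_add_distrib]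
  congr 1
  exact Finset.sum_congr rfl fun k _ => by rw [add_mul]


/-! ### auxiliary lemmas -/

lemma eSym_zero : eSym 0 = 1 := by rw [eSym]

lemma eSym_succ (n : ℕ) : eSym (n + 1) =
    ((n + 1 : ℚ))⁻¹ •
      ∑ j ∈ Finset.range (n + 1), ((-1 : ℚ) ^ j) • (pSym (j + 1) * eSym (n - j)) := by
  rw [eSym]

/-- the sequence `f_m = (-1)^m e_m` -/
def fSeq (m : ℕ) : SymmFn := ((-1 : ℚ) ^ m) • eSym m

lemma LD_f : LD fSeq (fun k => pSym k) := by
  constructor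
  · simp [fSeq, eSym_zero]
  intro m hm
  obtain ⟨n, rfl⟩ : ∃ n, m = n + 1 := ⟨m - 1, by omega⟩
  have hne : ((n : ℚ) + 1) ≠ 0 := by positivity
  have e1 : ((n + 1 : ℕ) : ℚ) • fSeq (n + 1)
      = ∑ j ∈ Finset.range (n + 1), (((-1 : ℚ) ^ (n + 1)) * (-1 : ℚ) ^ j) •
          (pSym (j + 1) * eSym (n - j)) := by
    rw [fSeq, smul_smul, mul_comm, ← smul_smul, eSym_succ, smul_smul]
    push_cast
    rw [smul_smul, mul_assoc, mul_inv_cancel₀ hne, mul_one, Finset.smul_sum]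
    exact Finset.sum_congr rfl fun j _ => by rw [smul_smul]
  rw [e1, Icc_sum_eq_range]
  rw [← Finset.sum_neg_distrib]
  refine Finset.sum_congr rfl fun j hj => ?_
  have hj' : j ≤ n := by have := Finset.mem_range.mp hj; omega
  have h2 : n + 1 - (1 + j) = n - j := by omega
  rw [fSeq, h2, mul_smul_comm]
  have h3 : ((-1 : ℚ) ^ (n + 1)) * (-1 : ℚ) ^ j = -(-1 : ℚ) ^ (n - j) := by
    have h4 : n + 1 + j = (n - j) + (2 * j + 1) := by omega
    calc ((-1 : ℚ) ^ (n + 1)) * (-1 : ℚ) ^ j = (-1 : ℚ) ^ (n + 1 + j) := by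
          rw [← pow_add]
      _ = (-1 : ℚ) ^ ((n - j) + (2 * j + 1)) := by rw [h4]
      _ = -(-1 : ℚ) ^ (n - j) := by
          rw [pow_add, pow_add, pow_mul, neg_one_sq, one_pow, pow_one]; ring
  rw [h3, neg_smul, neg_inj]
  show (-1 : ℚ) ^ (n - j) • (pSym (j + 1) * eSym (n - j))
      = (-1 : ℚ) ^ (n - j) • (pSym (1 + j) * eSym (n - j))
  rw [Nat.add_comm 1 j]


lemma LD_poly_mul {q r : Polynomial ℚ} {v w : ℕ → ℚ}
    (hq : LD q.coeff v) (hr : LD r.coeff w) : LD (q * r).coeff (fun k => v k + w k) := by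
  have h := LD_mul hq hr
  have he : (q * r).coeff = fun m => ∑ j ∈ Finset.range (m + 1), q.coeff j * r.coeff (m - j) :=
    funext fun m => by rw [Polynomial.coeff_mul, Finset.Nat.sum_antidiagonal_eq_sum_range_succ_mk]
  rw [he]; exact h

lemma LD_poly_one : LD (1 : Polynomial ℚ).coeff (fun _ => (0 : ℚ)) := by
  constructor
  · simp
  intro m hm
  rw [Polynomial.coeff_one]
  simp [show m ≠ 0 by omega]

lemma LD_one_sub_X_pow {i : ℕ} (hi : 1 ≤ i) :
    LD (1 - Polynomial.X ^ i : Polynomial ℚ).coeff (fun k => if i ∣ k then (i : ℚ) else 0) := by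
  have hc : ∀ t, (1 - Polynomial.X ^ i : Polynomial ℚ).coeff t
      = (if t = 0 then 1 else 0) - (if t = i then 1 else 0) := by
    intro t
    rw [Polynomial.coeff_sub, Polynomial.coeff_one, Polynomial.coeff_X_pow]
  constructor
  · rw [hc]; simp [show ¬ ((0 : ℕ) = i) by omega]
  intro m hm
  simp only [hc, smul_eq_mul]
  have hterm : ∀ k ∈ Finset.Icc 1 m, (if i ∣ k then (i : ℚ) else 0) *
      ((if m - k = 0 then 1 else 0) - (if m - k = i then 1 else 0))
      = (if k = m then (if i ∣ m then (i : ℚ) else 0) else 0)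
        - (if k = m - i then (if i ∣ m ∧ i < m then (i : ℚ) else 0) else 0) := by
    intro k hk
    have hk' := Finset.mem_Icc.mp hk
    rw [mul_sub]
    have e1 : (if i ∣ k then (i : ℚ) else 0) * (if m - k = 0 then 1 else 0)
        = if k = m then (if i ∣ m then (i : ℚ) else 0) else 0 := by
      rw [ite_zero_mul_ite_zero, mul_one, ← ite_and]
      refine if_congr ?_ rfl rfl
      constructor
      · rintro ⟨h1, h2⟩
        have h3 : k = m := by omega
        exact ⟨h3, h3 ▸ h1⟩
      · rintro ⟨h1, h2⟩
        exact ⟨h1 ▸ h2, by omega⟩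
    have e2 : (if i ∣ k then (i : ℚ) else 0) * (if m - k = i then 1 else 0)
        = if k = m - i then (if i ∣ m ∧ i < m then (i : ℚ) else 0) else 0 := by
      rw [ite_zero_mul_ite_zero, mul_one, ← ite_and]
      refine if_congr ?_ rfl rfl
      constructor
      · rintro ⟨h1, h2⟩
        have h7 : i < m := by omega
        have h8 : i ∣ m := by
          have h9 : m = k + i := by omega
          rw [h9]; exact dvd_add h1 dvd_rfl
        exact ⟨by omega, h8, h7⟩
      · rintro ⟨h1, h2, h3⟩
        have h4 : i ∣ k := h1 ▸ Nat.dvd_sub h2 dvd_rfl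
        exact ⟨h4, by omega⟩
    rw [e1, e2]
  rw [Finset.sum_congr rfl hterm, Finset.sum_sub_distrib,
    Finset.sum_ite_eq' (Finset.Icc 1 m), Finset.sum_ite_eq' (Finset.Icc 1 m)]
  have hmem : m ∈ Finset.Icc 1 m := Finset.mem_Icc.mpr ⟨hm, le_rfl⟩
  rw [if_pos hmem, if_neg (show ¬ (m = 0) by omega)]
  by_cases hd : i ∣ m
  · by_cases him : i = m
    · rw [if_pos hd, if_pos (show m = i by omega),
        if_neg (show ¬ (m - i ∈ Finset.Icc 1 m) by simp [Finset.mem_Icc]; omega)]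
      push_cast [him]; ring
    · have hlt : i < m := by
        have := Nat.le_of_dvd (by omega) hd
        omega
      rw [if_pos hd, if_neg (show ¬ (m = i) by omega),
        if_pos (show m - i ∈ Finset.Icc 1 m from Finset.mem_Icc.mpr ⟨by omega, by omega⟩),
        if_pos ⟨hd, hlt⟩]
      ring
  · have hne : ¬ (m = i) := fun h => hd (h ▸ dvd_rfl)
    rw [if_neg hd, if_neg hne, if_neg (show ¬ (i ∣ m ∧ i < m) from fun h => hd h.1), ite_self]
    ring

lemma LD_one_sub_X_pow_pow {i : ℕ} (hi : 1 ≤ i) (e : ℕ) :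
    LD ((1 - Polynomial.X ^ i : Polynomial ℚ) ^ e).coeff
      (fun k => if i ∣ k then ((e : ℚ) * i) else 0) := by
  induction e with
  | zero =>
    refine LD_congr (v := fun _ => (0 : ℚ)) ?_ ?_
    · rw [pow_zero]; exact LD_poly_one
    · intro k _; simp
  | succ e ih =>
    have h := LD_poly_mul ih (LD_one_sub_X_pow hi)
    rw [pow_succ]
    refine LD_congr h fun k _ => ?_
    by_cases hd : i ∣ k
    · simp only [hd, if_pos]
      push_cast; ring
    · simp [hd]

lemma LD_prod_one_sub (s : Finset ℕ) (hs : ∀ i ∈ s, 1 ≤ i) (E : ℕ → ℕ) :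
    LD ((∏ i ∈ s, (1 - Polynomial.X ^ i : Polynomial ℚ) ^ E i).coeff)
      (fun k => ∑ i ∈ s, if i ∣ k then ((E i : ℚ) * i) else 0) := by
  induction s using Finset.induction_on with
  | empty =>
    refine LD_congr (v := fun _ => (0 : ℚ)) ?_ ?_
    · rw [Finset.prod_empty]; exact LD_poly_one
    · intro k _; simp
  | @insert j t hnotmem ih =>
    have hj : 1 ≤ j := hs j (Finset.mem_insert_self j t)
    have ht : ∀ i ∈ t, 1 ≤ i := fun i hi => hs i (Finset.mem_insert_of_mem hi)
    have h := LD_poly_mul (LD_one_sub_X_pow_pow hj (E j)) (ih ht)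
    rw [Finset.prod_insert hnotmem]
    refine LD_congr h fun k _ => ?_
    rw [Finset.sum_insert hnotmem]

lemma LD_cCoeff (a : ℕ →₀ ℕ) (ha0 : a 0 = 0) : LD (cCoeff a) (divSum a) := by
  have hsupp : ∀ i ∈ a.support, 1 ≤ i := by
    intro i hi
    rcases Nat.eq_zero_or_pos i with h | h
    · exact absurd (Finsupp.mem_support_iff.mp hi) (by simp [h, ha0])
    · exact h
  have h := LD_prod_one_sub a.support hsupp a
  refine LD_congr h ?_
  intro k hk
  have h2 : a.support.filter (· ∣ k) ⊆ k.divisors := fun d hd =>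
    Nat.mem_divisors.mpr ⟨(Finset.mem_filter.mp hd).2, by omega⟩
  calc (∑ i ∈ a.support, if i ∣ k then ((a i : ℚ) * i) else 0)
      = ∑ i ∈ a.support.filter (· ∣ k), ((a i : ℚ) * i) := (Finset.sum_filter _ _).symm
    _ = ∑ d ∈ k.divisors, ((a d : ℚ) * d) := by
        refine Finset.sum_subset h2 fun d hd hnd => ?_
        have ha : a d = 0 := by
          by_contra hne
          exact hnd (Finset.mem_filter.mpr
            ⟨Finsupp.mem_support_iff.mpr hne, (Nat.mem_divisors.mp hd).1⟩)
        simp [ha]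
    _ = divSum a k := by
        rw [divSum, Nat.cast_sum]
        push_cast
        exact Finset.sum_congr rfl fun d _ => mul_comm _ _


/-! ### the partition side -/

/-- coefficient `(-1/i)^m / m!` -/
def Kc (i m : ℕ) : ℚ := (-(i : ℚ)⁻¹) ^ m / (Nat.factorial m : ℚ)

/-- the coefficient attached to a multiset of parts -/
def coefM (s : Multiset ℕ) : ℚ := ∏ i ∈ s.toFinset, Kc i (s.count i)

/-- the full term attached to a multiset of parts -/
def Gm (a : ℕ →₀ ℕ) (s : Multiset ℕ) : SymmFn := coefM s • (s.map (uSym a)).prod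

/-- the partition sums -/
def wSeq (a : ℕ →₀ ℕ) (n : ℕ) : SymmFn := ∑ π : n.Partition, Gm a π.parts

lemma coefM_eq {n : ℕ} (π : n.Partition) :
    (-1 : ℚ) ^ n * sgnPart π / zPart π = coefM π.parts := by
  classical
  have hpow : (-1 : ℚ) ^ n = ∏ i ∈ π.parts.toFinset, (-1 : ℚ) ^ (π.parts.count i * i) := by
    have h2 : n = ∑ i ∈ π.parts.toFinset, π.parts.count i * i := by
      conv_lhs => rw [← π.parts_sum]
      rw [Finset.sum_multiset_count π.parts]
      exact Finset.sum_congr rfl fun i _ => by rw [smul_eq_mul]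
    rw [Finset.prod_pow_eq_pow_sum, ← h2]
  rw [sgnPart, zPart, hpow, ← Finset.prod_mul_distrib, ← Finset.prod_div_distrib, coefM]
  refine Finset.prod_congr rfl fun i hi => ?_
  have hipos : 0 < i := π.parts_pos (Multiset.mem_toFinset.mp hi)
  set c := π.parts.count i with hc
  have hbase : (-1 : ℚ) ^ (c * i) * (if Even i then (-1 : ℚ) ^ c else 1) = (-1 : ℚ) ^ c := by
    by_cases hev : Even i
    · rw [if_pos hev]
      rcases hev with ⟨t, ht⟩
      have h3 : c * i = 2 * (c * t) := by rw [ht]; ring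
      rw [h3, pow_mul, neg_one_sq, one_pow, one_mul]
    · rw [if_neg hev, mul_one]
      rcases Nat.not_even_iff_odd.mp hev with ⟨t, ht⟩
      have h3 : c * i = 2 * (c * t) + c := by rw [ht]; ring
      rw [h3, pow_add, pow_mul, neg_one_sq, one_pow, one_mul]
  rw [hbase, Kc]
  have h1 : ((i : ℚ)) ^ c ≠ 0 := pow_ne_zero _ (Nat.cast_ne_zero.mpr (by omega))
  have h2 : ((Nat.factorial c : ℕ) : ℚ) ≠ 0 := Nat.cast_ne_zero.mpr c.factorial_ne_zero
  have h5 : (-(i : ℚ)⁻¹) ^ c = (-1 : ℚ) ^ c * ((i : ℚ) ^ c)⁻¹ := by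
    rw [← inv_pow, ← neg_one_mul, mul_pow]
  rw [h5]
  field_simp

lemma Kc_succ (k c : ℕ) :
    Kc k (c + 1) = ((-(k : ℚ)⁻¹) / ((c : ℚ) + 1)) * Kc k c := by
  rw [Kc, Kc, pow_succ, Nat.factorial_succ]
  have h2 : ((Nat.factorial c : ℕ) : ℚ) ≠ 0 := Nat.cast_ne_zero.mpr c.factorial_ne_zero
  have h3 : ((c : ℚ) + 1) ≠ 0 := by positivity
  push_cast
  field_simp

lemma coefM_cons (k : ℕ) (s : Multiset ℕ) :
    coefM (k ::ₘ s) = ((-(k : ℚ)⁻¹) / ((s.count k : ℚ) + 1)) * coefM s := by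
  classical
  rw [coefM, coefM, Multiset.toFinset_cons]
  by_cases hmem : k ∈ s.toFinset
  · rw [Finset.insert_eq_self.mpr hmem, ← Finset.mul_prod_erase _ _ hmem,
      ← Finset.mul_prod_erase _ (fun i => Kc i (s.count i)) hmem]
    have hcount : ∀ i ∈ s.toFinset.erase k, (k ::ₘ s).count i = s.count i := fun i hi =>
      Multiset.count_cons_of_ne (Finset.ne_of_mem_erase hi) s
    rw [Finset.prod_congr rfl (fun i hi => by rw [hcount i hi]), Multiset.count_cons_self,
      Kc_succ]
    ring
  · rw [Finset.prod_insert hmem]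
    have hcount0 : s.count k = 0 :=
      Multiset.count_eq_zero.mpr (fun h => hmem (Multiset.mem_toFinset.mpr h))
    have hcount : ∀ i ∈ s.toFinset, (k ::ₘ s).count i = s.count i := fun i hi =>
      Multiset.count_cons_of_ne (by rintro rfl; exact hmem hi) s
    rw [Finset.prod_congr rfl (fun i hi => by rw [hcount i hi]), Multiset.count_cons_self,
      hcount0, Kc_succ]
    norm_num [Kc]

lemma Gm_cons (a : ℕ →₀ ℕ) (k : ℕ) (s : Multiset ℕ) :
    Gm a (k ::ₘ s) = ((-(k : ℚ)⁻¹) / ((s.count k : ℚ) + 1)) • (uSym a k * Gm a s) := by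
  rw [Gm, Gm, Multiset.map_cons, Multiset.prod_cons, coefM_cons, mul_smul_comm, smul_smul]

/-- removing a part `k` from a partition of `n` -/
def erasePart {n : ℕ} (k : ℕ) (π : n.Partition) (hk : k ∈ π.parts) : (n - k).Partition where
  parts := π.parts.erase k
  parts_pos := fun {x} hx => π.parts_pos (Multiset.mem_of_mem_erase hx)
  parts_sum := by
    have h := π.parts_sum
    rw [← Multiset.cons_erase hk, Multiset.sum_cons] at h
    omega

/-- adding a part `k` to a partition of `n - k` -/
def consPart {n : ℕ} (k : ℕ) (hk1 : 1 ≤ k) (hkn : k ≤ n) (σ : (n - k).Partition) :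
    n.Partition where
  parts := k ::ₘ σ.parts
  parts_pos := fun {x} hx => by
    rcases Multiset.mem_cons.mp hx with rfl | hx'
    · omega
    · exact σ.parts_pos hx'
  parts_sum := by
    rw [Multiset.sum_cons, σ.parts_sum]
    omega

lemma sum_count_smul (a : ℕ →₀ ℕ) {n : ℕ} (k : ℕ) (hk1 : 1 ≤ k) (hkn : k ≤ n) :
    ∑ π : n.Partition, ((π.parts.count k : ℚ)) • Gm a π.parts
      = ∑ σ : (n - k).Partition, ((σ.parts.count k : ℚ) + 1) • Gm a (k ::ₘ σ.parts) := by
  classical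
  rw [← Finset.sum_filter_of_ne (p := fun π : n.Partition => k ∈ π.parts)
    (fun π _ hne => by
      by_contra hmem
      exact hne (by rw [Multiset.count_eq_zero.mpr hmem, Nat.cast_zero, zero_smul]))]
  refine Finset.sum_bij'
    (fun π hπ => erasePart k π (Finset.mem_filter.mp hπ).2)
    (fun σ _ => consPart k hk1 hkn σ)
    (fun π hπ => Finset.mem_univ _)
    (fun σ hσ => Finset.mem_filter.mpr ⟨Finset.mem_univ _, Multiset.mem_cons_self _ _⟩)
    (fun π hπ => ?_) (fun σ hσ => ?_) (fun π hπ => ?_)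
  · exact Nat.Partition.ext
      (by simp [consPart, erasePart, Multiset.cons_erase (Finset.mem_filter.mp hπ).2])
  · exact Nat.Partition.ext (by simp [consPart, erasePart, Multiset.erase_cons_head])
  · have hkmem : k ∈ π.parts := (Finset.mem_filter.mp hπ).2
    have h1 : 1 ≤ π.parts.count k := Multiset.one_le_count_iff_mem.mpr hkmem
    have h2 : (π.parts.erase k).count k = π.parts.count k - 1 := Multiset.count_erase_self _ _
    show _ = ((((erasePart k π hkmem).parts.count k : ℕ) : ℚ) + 1) •
      Gm a (k ::ₘ (erasePart k π hkmem).parts)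
    have h3 : k ::ₘ (erasePart k π hkmem).parts = π.parts := Multiset.cons_erase hkmem
    rw [h3]
    show ((π.parts.count k : ℚ)) • Gm a π.parts = _
    congr 1
    show ((π.parts.count k : ℕ) : ℚ) = (((π.parts.erase k).count k : ℕ) : ℚ) + 1
    rw [h2, Nat.cast_sub h1]
    ring

lemma wSeq_zero (a : ℕ →₀ ℕ) : wSeq a 0 = 1 := by
  rw [wSeq, Finset.univ_unique, Finset.sum_singleton, Nat.Partition.partition_zero_parts]
  simp [Gm, coefM]

lemma LD_w (a : ℕ →₀ ℕ) : LD (wSeq a) (uSym a) := by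
  constructor
  · exact wSeq_zero a
  intro n hn
  have step1 : ∀ π : n.Partition, (n : ℚ) • Gm a π.parts
      = ∑ k ∈ Finset.Icc 1 n, ((k * π.parts.count k : ℕ) : ℚ) • Gm a π.parts := by
    intro π
    rw [← Finset.sum_smul]
    congr 1
    have hsub : π.parts.toFinset ⊆ Finset.Icc 1 n := by
      intro i hi
      have hmem := Multiset.mem_toFinset.mp hi
      exact Finset.mem_Icc.mpr
        ⟨π.parts_pos hmem, (Multiset.le_sum_of_mem hmem).trans_eq π.parts_sum⟩
    have h2 : n = ∑ i ∈ Finset.Icc 1 n, i * π.parts.count i := by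
      conv_lhs => rw [← π.parts_sum, Finset.sum_multiset_count_of_subset _ _ hsub]
      exact Finset.sum_congr rfl fun i _ => by rw [smul_eq_mul]; ring
    exact_mod_cast congrArg (fun x : ℕ => (x : ℚ)) h2
  rw [wSeq, Finset.smul_sum, Finset.sum_congr rfl (fun π _ => step1 π), Finset.sum_comm,
    ← Finset.sum_neg_distrib]
  refine Finset.sum_congr rfl fun k hk => ?_
  have hk' := Finset.mem_Icc.mp hk
  have e1 : ∀ π : n.Partition, ((k * π.parts.count k : ℕ) : ℚ) • Gm a π.parts
      = (k : ℚ) • ((π.parts.count k : ℚ) • Gm a π.parts) := fun π => by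
    rw [smul_smul]; push_cast; ring_nf
  rw [Finset.sum_congr rfl (fun π _ => e1 π), ← Finset.smul_sum,
    sum_count_smul a k hk'.1 hk'.2]
  have e2 : ∀ σ : (n - k).Partition, ((σ.parts.count k : ℚ) + 1) • Gm a (k ::ₘ σ.parts)
      = (-(k : ℚ)⁻¹) • (uSym a k * Gm a σ.parts) := by
    intro σ
    rw [Gm_cons, smul_smul]
    congr 1
    have hcne : ((σ.parts.count k : ℚ) + 1) ≠ 0 := by positivity
    rw [mul_comm, div_mul_cancel₀ _ hcne]
  rw [Finset.sum_congr rfl (fun σ _ => e2 σ), ← Finset.smul_sum, smul_smul]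
  have hkne : (k : ℚ) ≠ 0 := Nat.cast_ne_zero.mpr (by omega)
  have h4 : (k : ℚ) * (-(k : ℚ)⁻¹) = -1 := by field_simp
  rw [h4, neg_one_smul, wSeq, Finset.mul_sum]

/-- For every `m ≥ 1`,
`E_m = − ∑_{n=1}^{m} (−1)^n c_{m−n} ∑_{λ ⊢ n} sgn(λ)·u_λ/z_λ` in `Λ`; in particular
`E_m` lies in the ideal generated by the `uₙ`, `n ≥ 1`. -/
theorem ESym_eq_sum_uPart (a : ℕ →₀ ℕ) (ha0 : a 0 = 0) (m : ℕ) (hm : 1 ≤ m) :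
    (ESym a m =
      - ∑ n ∈ Finset.Icc 1 m, ∑ π : n.Partition,
          (((-1 : ℚ) ^ n * cCoeff a (m - n)) * (sgnPart π / zPart π)) • uPart a π) ∧
    ESym a m ∈ Uideal a := by
  classical
  have hC : LD (fun m => (MvPolynomial.C (cCoeff a m) : SymmFn))
      (fun k => MvPolynomial.C (divSum a k)) := by
    have h := LD_cCoeff a ha0
    constructor
    · show (MvPolynomial.C (cCoeff a 0) : SymmFn) = 1
      rw [h.1, map_one]
    · intro j hj
      have h2 := h.2 j hj
      rw [smul_eq_mul] at h2
      calc (j : ℚ) • (MvPolynomial.C (cCoeff a j) : SymmFn)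
          = MvPolynomial.C ((j : ℚ) * cCoeff a j) := by
            rw [map_mul, ← MvPolynomial.smul_eq_C_mul]
        _ = MvPolynomial.C (-∑ k ∈ Finset.Icc 1 j, divSum a k * cCoeff a (j - k)) := by
            rw [h2]
        _ = -∑ k ∈ Finset.Icc 1 j,
              MvPolynomial.C (divSum a k) * MvPolynomial.C (cCoeff a (j - k)) := by
            rw [map_neg, map_sum]
            congr 1
            exact Finset.sum_congr rfl fun k _ => map_mul _ _ _
  have hmix := LD_mul hC (LD_w a)
  have hmix' : LD (fun j => ∑ i ∈ Finset.range (j + 1),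
      MvPolynomial.C (cCoeff a i) * wSeq a (j - i)) (fun k => pSym k) := by
    refine LD_congr hmix fun k hk => ?_
    rw [uSym]
    ring
  have hfe : ∀ j, fSeq j = ∑ i ∈ Finset.range (j + 1),
      MvPolynomial.C (cCoeff a i) * wSeq a (j - i) := LD_unique LD_f hmix'
  have key : ESym a m = -∑ n ∈ Finset.Icc 1 m, MvPolynomial.C (cCoeff a (m - n)) * wSeq a n := by
    have h1 : ESym a m = -(fSeq m) + MvPolynomial.C (cCoeff a m) := by
      rw [ESym, fSeq, neg_smul]
    rw [h1, hfe m, Finset.sum_range_succ, Nat.sub_self, wSeq_zero, mul_one]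
    have h3 : ∀ x y : SymmFn, -(x + y) + y = -x := fun x y => by ring
    rw [h3]
    rw [neg_inj]
    rw [Icc_sum_eq_range, ← Finset.sum_range_reflect]
    refine Finset.sum_congr rfl fun l hl => ?_
    have hl' := Finset.mem_range.mp hl
    have e1 : m - 1 - l = m - (1 + l) := by omega
    rw [e1, show m - (m - (1 + l)) = 1 + l by omega]
  have inner : ∀ n : ℕ, (∑ π : n.Partition,
      (((-1 : ℚ) ^ n * cCoeff a (m - n)) * (sgnPart π / zPart π)) • uPart a π)
      = MvPolynomial.C (cCoeff a (m - n)) * wSeq a n := by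
    intro n
    rw [wSeq, Finset.mul_sum]
    refine Finset.sum_congr rfl fun π _ => ?_
    have h := coefM_eq π
    have e : ((-1 : ℚ) ^ n * cCoeff a (m - n)) * (sgnPart π / zPart π)
        = cCoeff a (m - n) * ((-1 : ℚ) ^ n * sgnPart π / zPart π) := by ring
    rw [e, mul_smul, h, MvPolynomial.smul_eq_C_mul]
    rfl
  have hw_mem : ∀ n, 1 ≤ n → wSeq a n ∈ Uideal a := by
    intro n hn
    rw [wSeq]
    refine Submodule.sum_mem _ fun π _ => ?_
    rw [Gm, MvPolynomial.smul_eq_C_mul]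
    refine Ideal.mul_mem_left _ _ ?_
    have hne : π.parts ≠ 0 := by
      intro h
      have h2 := π.parts_sum
      rw [h, Multiset.sum_zero] at h2
      omega
    obtain ⟨x, hx⟩ := Multiset.exists_mem_of_ne_zero hne
    have hxpos := π.parts_pos hx
    rw [← Multiset.cons_erase hx, Multiset.map_cons, Multiset.prod_cons]
    exact Ideal.mul_mem_right _ _ (Ideal.subset_span ⟨x, hxpos, rfl⟩)
  constructor
  · rw [key]
    congr 1
    exact Finset.sum_congr rfl fun n _ => (inner n).symm
  · rw [key]
    exact neg_mem (Submodule.sum_mem _ fun n hn =>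
      Ideal.mul_mem_left _ _ (hw_mem n (Finset.mem_Icc.mp hn).1))

end
end
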